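/- arXiv:2507.12631 — 5 statements merged into one kernel-verified Lean document; each statement's English description precedes it below -/
import Mathlib

section
/- Let A be a set in the monster model of a complete theory T with distinguished unary predicate P, and suppose P is stably embedded with uniform definitions Ψ_ψ. If A is complete, then for every tuple ā ⊆ A and every formula ψ(x̄,ȳ), the ψ-type tp_ψ(ā / P ∩ A) is definable by Ψ_ψ(ȳ, c̄) for some c̄ ⊆ A ∩ P. -/
open FirstOrder FirstOrder.Language FirstOrder.Language.Structure Cardinal

universe u

namespace Gaifman

variable (L : FirstOrder.Language.{u, u}) {C : Type u} [L.Structure C]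

/-- The set of elements of the monster satisfying the unary predicate `P`. -/
def Pset (Pr : L.Relations 1) : Set C := {x | RelMap Pr ![x]}

/-- A set `A` is complete: every formula `(∃ x̄ ∈ P) ψ(x̄, b̄)` with `b̄ ⊆ A` that is
satisfied (with witnesses in `P`) has witnesses in `P ∩ A`. -/
def IsComplete (Pr : L.Relations 1) (A : Set C) : Prop :=
  ∀ (n m : ℕ) (ψ : L.Formula (Fin n ⊕ Fin m)) (b : Fin m → C),
    (∀ i, b i ∈ A) →
    (∃ a : Fin n → C, (∀ i, a i ∈ Pset L Pr) ∧ ψ.Realize (Sum.elim a b)) →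
    ∃ a : Fin n → C, (∀ i, a i ∈ Pset L Pr ∩ A) ∧ ψ.Realize (Sum.elim a b)

/-- `A ⊆_t B` : every formula with parameters in `A` satisfied by a tuple from `B`
is satisfied by a tuple from `A`. -/
def SubT (A B : Set C) : Prop :=
  ∀ (n m : ℕ) (ψ : L.Formula (Fin n ⊕ Fin m)) (a : Fin m → C) (b : Fin n → C),
    (∀ i, a i ∈ A) → (∀ i, b i ∈ B) → ψ.Realize (Sum.elim b a) →
    ∃ b' : Fin n → C, (∀ i, b' i ∈ A) ∧ ψ.Realize (Sum.elim b' a)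

/-- The type of the tuple `c` over the parameter set `A`, as a set of formulas with
parameters from `A`. -/
def TpSet (A : Set C) {k : ℕ} (c : Fin k → C) :
    Set (Σ m : ℕ, L.Formula (Fin k ⊕ Fin m) × (Fin m → C)) :=
  {x | (∀ i, x.2.2 i ∈ A) ∧ x.2.1.Realize (Sum.elim c x.2.2)}

/-- Two tuples have the same type over `A`. -/
def SameTpOver (A : Set C) {k : ℕ} (c c' : Fin k → C) : Prop :=
  ∀ (m : ℕ) (φ : L.Formula (Fin k ⊕ Fin m)) (b : Fin m → C), (∀ i, b i ∈ A) →
    (φ.Realize (Sum.elim c b) ↔ φ.Realize (Sum.elim c' b))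

/-- `tp(c/B) ∈ S_*(B)` : realizations add no new `P`-points and preserve completeness. -/
def InSStar (Pr : L.Relations 1) (B : Set C) {k : ℕ} (c : Fin k → C) : Prop :=
  Pset L Pr ∩ (B ∪ Set.range c) = Pset L Pr ∩ B ∧ IsComplete L Pr (B ∪ Set.range c)

/-- The type of `c` over `B` is locally isolated: for every formula `φ` there is a
formula `θ ∈ tp(c/B)` implying the `φ`-part of `tp(c/B)`. -/
def LocallyIsolatedTp (B : Set C) {k : ℕ} (c : Fin k → C) : Prop :=
  ∀ (m : ℕ) (φ : L.Formula (Fin k ⊕ Fin m)),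
    ∃ (m' : ℕ) (θ : L.Formula (Fin k ⊕ Fin m')) (a : Fin m' → C),
      (∀ i, a i ∈ B) ∧ θ.Realize (Sum.elim c a) ∧
      ∀ c' : Fin k → C, θ.Realize (Sum.elim c' a) →
        ∀ b : Fin m → C, (∀ i, b i ∈ B) →
          (φ.Realize (Sum.elim c b) → φ.Realize (Sum.elim c' b))

/-- The type of `c` over `B` is `λ`-isolated over `B₀ ⊆ B`: a subtype of size `< λ`
with parameters in `B₀` implies the whole type. -/
def LamIsolatedTpOver (lam : Cardinal.{u}) (B B₀ : Set C) {k : ℕ} (c : Fin k → C) : Prop :=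
  ∃ r ⊆ TpSet L B c, (∀ x ∈ r, ∀ i, x.2.2 i ∈ B₀) ∧ #r < lam ∧
    ∀ c' : Fin k → C, (∀ x ∈ r, x.2.1.Realize (Sum.elim c' x.2.2)) →
      ∀ x ∈ TpSet L B c, x.2.1.Realize (Sum.elim c' x.2.2)

/-- `D` is `λ`-compact: every type over parameters from `D` of size `< λ` which is
realized in the monster is realized in `D`. -/
def IsLamCompact (lam : Cardinal.{u}) (D : Set C) : Prop :=
  ∀ (k : ℕ) (p : Set (Σ m : ℕ, L.Formula (Fin k ⊕ Fin m) × (Fin m → C))),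
    (∀ x ∈ p, ∀ i, x.2.2 i ∈ D) → #p < lam →
    (∃ c : Fin k → C, ∀ x ∈ p, x.2.1.Realize (Sum.elim c x.2.2)) →
    ∃ c : Fin k → C, (∀ i, c i ∈ D) ∧ ∀ x ∈ p, x.2.1.Realize (Sum.elim c x.2.2)

/-- `B` is locally constructible over `A`: `B = A ∪ {d_i : i < α}` where each
`tp(d_i / A ∪ {d_j : j < i})` is locally isolated. -/
def LocallyConstructibleOver (A B : Set C) : Prop :=
  ∃ (ι : Type u) (r : ι → ι → Prop) (_ : IsWellOrder ι r) (d : ι → C),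
    B = A ∪ Set.range d ∧
    ∀ i : ι, LocallyIsolatedTp L (A ∪ d '' {j | r j i}) ![d i]

section Relational

variable (hf : ∀ n, IsEmpty (L.Functions n))

/-- In a relational language, any subset of the monster is (the carrier of) a
substructure. -/
def setSub (A : Set C) : L.Substructure C :=
  { carrier := A
    fun_mem := fun {n} f => (hf n).elim f }

/-- Truth of a formula at a tuple from `D`, computed in the induced structure on `D`. -/
def SetRealize (D : Set C) {α : Type*} (φ : L.Formula α) (v : α → C) : Prop :=
  ∃ hv : ∀ i, v i ∈ D, φ.Realize (M := ↥(setSub L hf D)) fun i => ⟨v i, hv i⟩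

/-- `D` is an elementary substructure of the induced structure on `E`. -/
def ElemPair (D E : Set C) : Prop :=
  D ⊆ E ∧ ∀ (n : ℕ) (φ : L.Formula (Fin n)) (v : Fin n → C), (∀ i, v i ∈ D) →
    (SetRealize L hf D φ v ↔ SetRealize L hf E φ v)

/-- `D` is an elementary substructure of the monster. -/
def ElemInC (D : Set C) : Prop :=
  ∀ (n : ℕ) (φ : L.Formula (Fin n)) (v : Fin n → C), (∀ i, v i ∈ D) →
    (SetRealize L hf D φ v ↔ φ.Realize v)

/-- Elementary equivalence of two sets, as induced substructures of the monster. -/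
def ElemEquivSets (A A' : Set C) : Prop :=
  L.completeTheory ↥(setSub L hf A) = L.completeTheory ↥(setSub L hf A')

/-- The collection `S_*(A)` of complete types over `A` weakly orthogonal to `P`,
represented by the sets of formulas of their realizations. -/
def SStar (Pr : L.Relations 1) (A : Set C) :
    Set (Σ k : ℕ, Set (Σ m : ℕ, L.Formula (Fin k ⊕ Fin m) × (Fin m → C))) :=
  {q | ∃ (k : ℕ) (c : Fin k → C), InSStar L Pr A c ∧ q = ⟨k, TpSet L A c⟩}

/-- `A` is stable over `P`: for every `A'` elementarily equivalent to `A` (as a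
substructure of the monster), `|S_*(A')| ≤ |A'| ^ |T|`. -/
def IsStable (Pr : L.Relations 1) (A : Set C) : Prop :=
  ∀ A' : Set C, ElemEquivSets L hf A A' → #(SStar L Pr A') ≤ #A' ^ (max L.card ℵ₀)

/-- `P` is "very stably embedded": the trace on `P` of any definable set is definable,
with parameters from `P`, *in the induced structure on `P`*. -/
def VeryStablyEmbedded (Pr : L.Relations 1) : Prop :=
  ∀ (n m : ℕ) (φ : L.Formula (Fin n ⊕ Fin m)) (b : Fin m → C),
    ∃ (m' : ℕ) (ψ : L.Formula (Fin n ⊕ Fin m')) (c : Fin m' → C), (∀ i, c i ∈ Pset L Pr) ∧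
      ∀ a : Fin n → C, (∀ i, a i ∈ Pset L Pr) →
        (φ.Realize (Sum.elim a b) ↔ SetRealize L hf (Pset L Pr) ψ (Sum.elim a c))

/-- Every model of `T` (i.e., elementary substructure of the monster) is stable over `P`. -/
def AllModelsStable (Pr : L.Relations 1) : Prop :=
  ∀ M : L.ElementarySubstructure C, IsStable L hf Pr ((M : L.Substructure C) : Set C)

end Relational

/-- `tp(c/B)` is definable over `D`: each `φ`-type has a definition with parameters in `D`. -/
def DefinableTpOver (B D : Set C) {k : ℕ} (c : Fin k → C) : Prop :=
  ∀ (m : ℕ) (φ : L.Formula (Fin k ⊕ Fin m)),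
    ∃ (m' : ℕ) (Ψ : L.Formula (Fin m ⊕ Fin m')) (d : Fin m' → C), (∀ i, d i ∈ D) ∧
      ∀ b : Fin m → C, (∀ i, b i ∈ B) →
        (φ.Realize (Sum.elim c b) ↔ Ψ.Realize (Sum.elim b d))

/-- `tp(e/B)` is the stationarization of `tp(c/A)` over `B`: for each formula `φ`, a
single definition with parameters in `A` defines both the `φ`-type of `c` over `A`
and the `φ`-type of `e` over `B`. -/
def IsStationarization (A B : Set C) {k : ℕ} (c e : Fin k → C) : Prop :=
  ∀ (m : ℕ) (φ : L.Formula (Fin k ⊕ Fin m)),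
    ∃ (m' : ℕ) (Ψ : L.Formula (Fin m ⊕ Fin m')) (a : Fin m' → C), (∀ i, a i ∈ A) ∧
      (∀ b : Fin m → C, (∀ i, b i ∈ A) →
        (φ.Realize (Sum.elim c b) ↔ Ψ.Realize (Sum.elim b a))) ∧
      (∀ b : Fin m → C, (∀ i, b i ∈ B) →
        (φ.Realize (Sum.elim e b) ↔ Ψ.Realize (Sum.elim b a)))

/-- `D ⫝_A B` : the type over `B` of every tuple from `D` is the stationarization of its
type over `A`. -/
def IndepOver (A B D : Set C) : Prop :=
  ∀ (k : ℕ) (c : Fin k → C), (∀ i, c i ∈ D) → IsStationarization L A B c c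


section Systems

variable (hf : ∀ n, IsEmpty (L.Functions n))

/-- The auxiliary language with a unary predicate for each index `s ∈ P(n)`,
used to view a system of sets as a single structure. -/
def sysLang : FirstOrder.Language.{0, 0} :=
  { Functions := fun _ => Empty
    Relations := fun n => match n with
      | 1 => Finset ℕ
      | _ => Empty }

/-- The structure on (the induced substructure on) `U` interpreting the predicate for
`s` as the set `A s`. -/
def sysStruc (A : Finset ℕ → Set C) (U : Set C) : sysLang.Structure ↥(setSub L hf U) where
  funMap := fun {n} f _ => Empty.elim f
  RelMap := fun {n} => match n with
    | 0 => fun r _ => Empty.elim r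
    | 1 => fun s x => (x 0 : C) ∈ A s
    | _ + 2 => fun r _ => Empty.elim r

/-- The union of the sets of a system. -/
def SysUnion (J : Set (Finset ℕ)) (A : Finset ℕ → Set C) : Set C := ⋃ s ∈ J, A s

/-- Truth of a formula of the expanded language (base language plus a predicate for each
index) in the system with sets `A s`, universe `U`, at a tuple `v` from `U`. -/
def SysRealize (A : Finset ℕ → Set C) (U : Set C) {α : Type*}
    (φ : (L.sum sysLang).Formula α) (v : α → C) : Prop :=
  ∃ hv : ∀ i, v i ∈ U,
    letI : sysLang.Structure ↥(setSub L hf U) := sysStruc L hf A U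
    φ.Realize (M := ↥(setSub L hf U)) fun i => ⟨v i, hv i⟩

/-- The system `⟨A s : s ∈ J⟩` is an elementary subsystem of `⟨A' s : s ∈ J⟩`
(both viewed as structures in the expanded language). -/
def SysElemSub (J : Set (Finset ℕ)) (A A' : Finset ℕ → Set C) : Prop :=
  (∀ s ∈ J, A s ⊆ A' s) ∧
  ∀ (n : ℕ) (φ : (L.sum sysLang).Formula (Fin n)) (v : Fin n → C),
    (∀ i, v i ∈ SysUnion J A) →
    (SysRealize L hf A (SysUnion J A) φ v ↔ SysRealize L hf A' (SysUnion J A') φ v)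

/-- The systems `⟨A s : s ∈ J⟩` and `⟨A' s : s ∈ J⟩` are elementarily equivalent
(as structures in the expanded language). -/
def SysElemEquiv (J : Set (Finset ℕ)) (A A' : Finset ℕ → Set C) : Prop :=
  ∀ φ : (L.sum sysLang).Formula (Fin 0),
    (SysRealize L hf A (SysUnion J A) φ finZeroElim ↔
      SysRealize L hf A' (SysUnion J A') φ finZeroElim)

end Systems

/-- Lexicographic order on finite sets of naturals via characteristic functions, with
position `0` most significant and `0 < 1`. -/
def lexLt (s t : Finset ℕ) : Prop := ∃ k, k ∈ t ∧ k ∉ s ∧ ∀ j < k, (j ∈ s ↔ j ∈ t)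

/-- `I` is a weakly nice index set for arity `n`: a hereditary subset of `P(n)`
containing all subsets of `{1, …, n-1}`. -/
def WeaklyNice (n : ℕ) (I : Set (Finset ℕ)) : Prop :=
  (∀ s ∈ I, s ⊆ Finset.range n) ∧
  (∀ s : Finset ℕ, s ⊆ Finset.range n → 0 ∉ s → s ∈ I) ∧
  (∀ s ∈ I, ∀ t ⊆ s, t ∈ I)

/-- `I` is nice: weakly nice and an initial segment of `P(n)` in lexicographic order. -/
def Nice (n : ℕ) (I : Set (Finset ℕ)) : Prop :=
  WeaklyNice n I ∧ ∀ s ∈ I, ∀ t ⊆ Finset.range n, lexLt t s → t ∈ I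

/-- `(I, s)` is nice: `I` is nice, `s` is the lexicographically last element of `I`,
and `0 ∈ s`. -/
def NicePair (n : ℕ) (I : Set (Finset ℕ)) (s : Finset ℕ) : Prop :=
  Nice n I ∧ s ∈ I ∧ 0 ∈ s ∧ ∀ t ∈ I, t ≠ s → lexLt t s

section GoodSys

variable (Pr : L.Relations 1) (hf : ∀ n, IsEmpty (L.Functions n))

/-- Clauses (ii)-(iv) of the definition of a good system (a weakly good presystem):
intersection condition; `A s ≺ P^C` for `0 ∉ s` and `A s ≺ C` for `0 ∈ s`; and
`A s ∩ P^C = A (s \ {0})`. -/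
def WG (I : Set (Finset ℕ)) (A : Finset ℕ → Set C) : Prop :=
  (∀ s ∈ I, ∀ t ∈ I, A s ∩ A t = A (s ∩ t)) ∧
  (∀ s ∈ I, 0 ∉ s → ElemPair L hf (A s) (Pset L Pr)) ∧
  (∀ s ∈ I, 0 ∈ s → ElemInC L hf (A s)) ∧
  (∀ s ∈ I, A s ∩ Pset L Pr = A (s.erase 0))

/-- Clause (vi): stability of the union over proper subsets of any `s ∈ I` with `0 ∈ s`. -/
def StabClause (I : Set (Finset ℕ)) (A : Finset ℕ → Set C) : Prop :=
  ∀ s ∈ I, 0 ∈ s → IsStable L hf Pr (⋃ t ∈ {t : Finset ℕ | t ⊂ s}, A t)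

/-- Clause (vii): witnesses may be moved into `A (s \ {m})`, keeping coordinates with
`m ∉ s` unchanged (`m = n - 1` is the last coordinate). -/
def WitnessClause (m : ℕ) (I : Set (Finset ℕ)) (A : Finset ℕ → Set C) : Prop :=
  ∀ (k : ℕ) (φ : L.Formula (Fin k)) (σ : Fin k → Finset ℕ) (b : Fin k → C),
    (∀ i, σ i ∈ I) → (∀ i, b i ∈ A (σ i)) → φ.Realize b →
    ∃ b' : Fin k → C, (∀ i, b' i ∈ A ((σ i).erase m)) ∧
      (∀ i, m ∉ σ i → b' i = b i) ∧ φ.Realize b'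

/-- `GS Pr hf n I A` : `⟨A s : s ∈ I⟩` is a good system for the (nice) index set
`I ⊆ P(n)`, by recursion on `n` (Definition 5.2 of the paper; clauses (i)-(viii)). -/
def GS : ℕ → Set (Finset ℕ) → (Finset ℕ → Set C) → Prop
  | 0, I, A => Nice 0 I ∧ WG L Pr hf I A ∧ StabClause L Pr hf I A
  | (m + 1), I, A =>
      Nice (m + 1) I ∧ WG L Pr hf I A ∧ StabClause L Pr hf I A ∧
      (∀ m', m = m' + 1 →
        SysElemSub L hf {s | s ⊆ Finset.Icc 1 m'} A (fun s => A (insert m s)) ∧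
        GS m {s | s ⊆ Finset.Icc 1 m'} A ∧
        GS m {s | s ⊆ Finset.Icc 1 m'} (fun s => A (insert m s))) ∧
      WitnessClause L m I A ∧
      GS m {s ∈ I | m ∉ s} A ∧
      GS m {s | m ∉ s ∧ insert m s ∈ I} (fun s => A (insert m s))

/-- Clause (v) of the definition of a good system, stated separately. -/
def Vclause (n : ℕ) (I : Set (Finset ℕ)) (A : Finset ℕ → Set C) : Prop :=
  ∀ m', n = m' + 2 →
    SysElemSub L hf {s | s ⊆ Finset.Icc 1 m'} A (fun s => A (insert (m' + 1) s)) ∧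
    GS L Pr hf (m' + 1) {s | s ⊆ Finset.Icc 1 m'} A ∧
    GS L Pr hf (m' + 1) {s | s ⊆ Finset.Icc 1 m'} (fun s => A (insert (m' + 1) s))

/-- A medium good system: clauses (ii)-(vi). -/
def MG (n : ℕ) (I : Set (Finset ℕ)) (A : Finset ℕ → Set C) : Prop :=
  WG L Pr hf I A ∧ Vclause L Pr hf n I A ∧ StabClause L Pr hf I A

/-- The index set `P⁻(n)` of all proper subsets of `{0, …, n-1}`. -/
def Pminus (n : ℕ) : Set (Finset ℕ) := {s | s ⊆ Finset.range n ∧ s ≠ Finset.range n}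

/-- `T` is `n`-stable over `P`: the union of every good `P⁻(n)`-system is stable. -/
def IsNStable (n : ℕ) : Prop :=
  ∀ A : Finset ℕ → Set C, GS L Pr hf n (Pminus n) A →
    IsStable L hf Pr (⋃ s ∈ Pminus n, A s)

end GoodSys


noncomputable def defFmla (Pr : L.Relations 1) {K n m : ℕ}
    (ψ : L.Formula (Fin n ⊕ Fin m)) (Ψ : L.Formula (Fin m ⊕ Fin K)) :
    L.Formula (Fin K ⊕ Fin n) :=
  Formula.iAlls (Fin m)
    ((BoundedFormula.iInf
        (fun i : Fin m => Pr.formula₁ (Term.var (Sum.inr i)))).imp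
      ((ψ.relabel (Sum.elim (fun j => Sum.inl (Sum.inr j)) Sum.inr)).iff
        (Ψ.relabel (Sum.elim Sum.inr (fun j => Sum.inl (Sum.inl j))))))

theorem defFmla_realize (Pr : L.Relations 1) {K n m : ℕ}
    (ψ : L.Formula (Fin n ⊕ Fin m)) (Ψ : L.Formula (Fin m ⊕ Fin K))
    (c : Fin K → C) (a : Fin n → C) :
    (defFmla L Pr ψ Ψ).Realize (Sum.elim c a) ↔
      ∀ d : Fin m → C, (∀ i, d i ∈ Pset L Pr) →
        (ψ.Realize (Sum.elim a d) ↔ Ψ.Realize (Sum.elim d c)) := by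
  simp only [defFmla, Formula.realize_iAlls, id_eq]
  apply forall_congr'
  intro d
  rw [Formula.Realize, BoundedFormula.realize_imp, BoundedFormula.realize_iff]
  have hP : ∀ xs, (BoundedFormula.iInf
        (fun i : Fin m => Pr.formula₁ (Term.var (Sum.inr i : (Fin K ⊕ Fin n) ⊕ Fin m)))).Realize
        (Sum.elim (Sum.elim c a) d) xs ↔ (∀ i, d i ∈ Pset L Pr) := by
    intro xs
    rw [BoundedFormula.realize_iInf]
    refine forall_congr' fun i => ?_
    rw [show (d i ∈ Pset L Pr) ↔ RelMap Pr ![d i] from Iff.rfl,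
      Relations.formula₁, Relations.formula,
      BoundedFormula.realize_rel]
    refine iff_of_eq (congrArg _ ?_)
    funext j
    fin_cases j
    simp [Term.realize]
  rw [hP]
  refine imp_congr_right fun hd => iff_congr ?_ ?_
  · exact Formula.realize_relabel.trans
      (iff_of_eq (congrArg _ (funext fun x => by cases x <;> rfl)))
  · exact Formula.realize_relabel.trans
      (iff_of_eq (congrArg _ (funext fun x => by cases x <;> rfl)))

/-- if `A` is complete then for every `ā ⊆ A` and every formula `ψ`,
the `ψ`-type of `ā` over `P ∩ A` is definable by `Ψ_ψ(ȳ, c̄)` with `c̄ ⊆ A ∩ P`. -/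
theorem statement_2 (Pr : L.Relations 1)
    (k : ∀ (n m : ℕ), L.Formula (Fin n ⊕ Fin m) → ℕ)
    (Ψ : ∀ (n m : ℕ) (ψ : L.Formula (Fin n ⊕ Fin m)), L.Formula (Fin m ⊕ Fin (k n m ψ)))
    (hSE : ∀ (n m : ℕ) (ψ : L.Formula (Fin n ⊕ Fin m)) (a : Fin n → C),
      ∃ c : Fin (k n m ψ) → C, (∀ i, c i ∈ Pset L Pr) ∧
        ∀ d : Fin m → C, (∀ i, d i ∈ Pset L Pr) →
          (ψ.Realize (Sum.elim a d) ↔ (Ψ n m ψ).Realize (Sum.elim d c)))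
    (A : Set C) (hA : IsComplete L Pr A)
    (n m : ℕ) (ψ : L.Formula (Fin n ⊕ Fin m)) (a : Fin n → C) (ha : ∀ i, a i ∈ A) :
    ∃ c : Fin (k n m ψ) → C, (∀ i, c i ∈ A ∩ Pset L Pr) ∧
      ∀ d : Fin m → C, (∀ i, d i ∈ Pset L Pr ∩ A) →
        (ψ.Realize (Sum.elim a d) ↔ (Ψ n m ψ).Realize (Sum.elim d c)) := by
  obtain ⟨c₀, hc₀P, hc₀⟩ := hSE n m ψ a
  obtain ⟨c, hcPA, hc⟩ := hA (k n m ψ) n (defFmla L Pr ψ (Ψ n m ψ)) a ha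
    ⟨c₀, hc₀P, (defFmla_realize L Pr ψ (Ψ n m ψ) c₀ a).2 hc₀⟩
  refine ⟨c, fun i => ⟨(hcPA i).2, (hcPA i).1⟩, fun d hd => ?_⟩
  exact (defFmla_realize L Pr ψ (Ψ n m ψ) c a).1 hc d (fun i => (hd i).1)

end Gaifman
end

section
/- Let B be a complete set in the monster model and p ∈ S(B) a locally isolated complete type. Then p ∈ S_*(B); that is, p is weakly orthogonal to P: for any realization c̄ of p, P ∩ (B ∪ c̄) = P ∩ B and B ∪ c̄ is complete. -/
open FirstOrder FirstOrder.Language FirstOrder.Language.Structure Cardinal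

universe u

namespace Gaifman

variable (L : FirstOrder.Language.{u, u}) {C : Type u} [L.Structure C]

/-- Key lemma: any formula with parameters split between `c` and `B` which has a
witness tuple in `P` has a witness tuple in `P ∩ B`. -/
lemma key_lemma (Pr : L.Relations 1)
    (B : Set C) (hB : IsComplete L Pr B) {k : ℕ} (c : Fin k → C)
    (h : LocallyIsolatedTp L B c) (n m : ℕ)
    (ψ : L.Formula (Fin n ⊕ (Fin k ⊕ Fin m))) (d : Fin m → C) (hd : ∀ i, d i ∈ B)
    (hex : ∃ a : Fin n → C, (∀ i, a i ∈ Pset L Pr) ∧ ψ.Realize (Sum.elim a (Sum.elim c d))) :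
    ∃ a : Fin n → C, (∀ i, a i ∈ Pset L Pr ∩ B) ∧ ψ.Realize (Sum.elim a (Sum.elim c d)) := by
  classical
  obtain ⟨a₀, ha₀, hψ₀⟩ := hex
  -- the formula (in variables for `c`, with parameters for `d` and the witnesses)
  -- whose tp-restriction we isolate: `¬ψ`
  let g : Fin n ⊕ (Fin k ⊕ Fin m) → Fin k ⊕ Fin (m + n) :=
    fun x => match x with
      | .inl x => .inr (Fin.natAdd m x)
      | .inr (.inl y) => .inl y
      | .inr (.inr z) => .inr (Fin.castAdd n z)
  obtain ⟨m', θ, aθ, haθ, hθc, himp⟩ := h (m + n) ((ψ.relabel g).not)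
  -- build `χ(x̄, ā⊕d̄) := ∃ȳ (θ(ȳ,ā) ∧ ψ(x̄,ȳ,d̄))`
  let g1 : Fin k ⊕ Fin m' → (Fin n ⊕ Fin (m' + m)) ⊕ Fin k :=
    fun x => match x with
      | .inl y => .inr y
      | .inr j => .inl (.inr (Fin.castAdd m j))
  let g2 : Fin n ⊕ (Fin k ⊕ Fin m) → (Fin n ⊕ Fin (m' + m)) ⊕ Fin k :=
    fun x => match x with
      | .inl x => .inl (.inl x)
      | .inr (.inl y) => .inr y
      | .inr (.inr z) => .inl (.inr (Fin.natAdd m' z))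
  let χ : L.Formula (Fin n ⊕ Fin (m' + m)) :=
    Formula.iExs (Fin k) ((θ.relabel g1) ⊓ (ψ.relabel g2))
  let bb : Fin (m' + m) → C := Fin.addCases aθ d
  have hbbB : ∀ i, bb i ∈ B := by
    intro i
    refine Fin.addCases (fun j => ?_) (fun j => ?_) i
    · simpa [bb] using haθ j
    · simpa [bb] using hd j
  have hwit : χ.Realize (Sum.elim a₀ bb) := by
    refine (Formula.realize_iExs).mpr ⟨c, ?_⟩
    rw [Formula.realize_inf, Formula.realize_relabel, Formula.realize_relabel]
    constructor
    · have : (Sum.elim (Sum.elim a₀ bb) c ∘ g1) = Sum.elim c aθ := by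
        funext x
        rcases x with y | j
        · rfl
        · simp [g1, bb, Fin.addCases_left]
      rw [this]; exact hθc
    · have : (Sum.elim (Sum.elim a₀ bb) c ∘ g2)
          = Sum.elim a₀ (Sum.elim c d) := by
        funext x
        rcases x with x | (y | z)
        · rfl
        · rfl
        · simp [g2, bb, Fin.addCases_right]
      rw [this]; exact hψ₀
  obtain ⟨a', ha', hχ'⟩ := hB n (m' + m) χ bb hbbB ⟨a₀, ha₀, hwit⟩
  obtain ⟨c', hc'⟩ := (Formula.realize_iExs).mp hχ'
  rw [Formula.realize_inf, Formula.realize_relabel, Formula.realize_relabel] at hc'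
  have hθ' : θ.Realize (Sum.elim c' aθ) := by
    have : (Sum.elim (Sum.elim a' bb) c' ∘ g1) = Sum.elim c' aθ := by
      funext x
      rcases x with y | j
      · rfl
      · simp [g1, bb, Fin.addCases_left]
    rw [this] at hc'
    exact hc'.1
  have hψ' : ψ.Realize (Sum.elim a' (Sum.elim c' d)) := by
    have : (Sum.elim (Sum.elim a' bb) c' ∘ g2)
        = Sum.elim a' (Sum.elim c' d) := by
      funext x
      rcases x with x | (y | z)
      · rfl
      · rfl
      · simp [g2, bb, Fin.addCases_right]
    rw [this] at hc'
    exact hc'.2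
  refine ⟨a', ha', ?_⟩
  by_contra hcon
  let bb2 : Fin (m + n) → C := Fin.addCases d a'
  have hbb2 : ∀ i, bb2 i ∈ B := by
    intro i
    refine Fin.addCases (fun j => ?_) (fun j => ?_) i
    · simpa [bb2] using hd j
    · simpa [bb2] using (ha' j).2
  have hcomp : ∀ e : Fin k → C, (Sum.elim e bb2 ∘ g) = Sum.elim a' (Sum.elim e d) := by
    intro e
    funext x
    rcases x with x | (y | z)
    · simp [g, bb2, Fin.addCases_right]
    · rfl
    · simp [g, bb2, Fin.addCases_left]
  have hφc : ((ψ.relabel g).not).Realize (Sum.elim c bb2) := by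
    rw [Formula.realize_not, Formula.realize_relabel, hcomp c]
    exact hcon
  have hφc' := himp c' hθ' bb2 hbb2 hφc
  rw [Formula.realize_not, Formula.realize_relabel, hcomp c'] at hφc'
  exact hφc' hψ'

/-- a locally isolated complete type over a complete set is weakly
orthogonal to `P`, i.e., belongs to `S_*(B)`. -/
theorem statement_4 (Pr : L.Relations 1) (hf : ∀ n, IsEmpty (L.Functions n))
    (hVSE : VeryStablyEmbedded (C := C) L hf Pr)
    (B : Set C) (hB : IsComplete L Pr B) {k : ℕ} (c : Fin k → C)
    (h : LocallyIsolatedTp L B c) : InSStar L Pr B c := by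
  classical
  constructor
  · -- `P ∩ (B ∪ range c) = P ∩ B`
    apply Set.eq_of_subset_of_subset
    · rintro x ⟨hxP, hxB | hxc⟩
      · exact ⟨hxP, hxB⟩
      · obtain ⟨j, hj⟩ := hxc
        refine ⟨hxP, ?_⟩
        -- `x = c j ∈ P`; use the key lemma with `ψ(x₀) := (x₀ = y_j)`
        obtain ⟨a', ha', hre⟩ := key_lemma L Pr B hB c h 1 0
          (Term.equal (Term.var (Sum.inl 0)) (Term.var (Sum.inr (Sum.inl j))))
          Fin.elim0 (fun i => i.elim0)
          ⟨fun _ => x, fun _ => hxP, by simp [hj]⟩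
        rw [Formula.realize_equal] at hre
        simp only [Term.realize_var, Sum.elim_inl, Sum.elim_inr] at hre
        rw [← hj, ← hre]
        exact (ha' 0).2
    · rintro x ⟨hxP, hxB⟩
      exact ⟨hxP, Or.inl hxB⟩
  · -- `B ∪ range c` is complete
    intro n m ψ b hb hex
    by_cases hall : ∀ i, ∃ j, c j = b i
    · -- all parameters come from `c`
      choose j hj using hall
      let g0 : Fin n ⊕ Fin m → Fin n ⊕ (Fin k ⊕ Fin 0) :=
        fun x => match x with
          | .inl x => .inl x
          | .inr i => .inr (.inl (j i))
      have hcomp : ∀ a : Fin n → C,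
          (Sum.elim a (Sum.elim c Fin.elim0) ∘ g0) = Sum.elim a b := by
        intro a
        funext x
        rcases x with x | i
        · rfl
        · simpa [g0] using hj i
      obtain ⟨a₀, ha₀, hψ₀⟩ := hex
      obtain ⟨a', ha', hre⟩ := key_lemma L Pr B hB c h n 0 (ψ.relabel g0)
        Fin.elim0 (fun i => i.elim0)
        ⟨a₀, ha₀, by rw [Formula.realize_relabel, hcomp a₀]; exact hψ₀⟩
      rw [Formula.realize_relabel, hcomp a'] at hre
      exact ⟨a', fun i => ⟨(ha' i).1, Or.inl (ha' i).2⟩, hre⟩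
    · -- some parameter lies in `B`; use it as filler for unused slots
      push_neg at hall
      obtain ⟨i0, hi0⟩ := hall
      have hb0 : b i0 ∈ B := by
        rcases hb i0 with hB' | hc'
        · exact hB'
        · obtain ⟨j, hj⟩ := hc'
          exact absurd hj (hi0 j)
      let b' : Fin m → C := fun i => if b i ∈ B then b i else b i0
      have hb' : ∀ i, b' i ∈ B := by
        intro i
        by_cases hi : b i ∈ B
        · simpa [b', hi]
        · simpa [b', hi] using hb0
      have hj : ∀ i, b i ∉ B → ∃ j, c j = b i := by
        intro i hi
        rcases hb i with hB' | hc'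
        · exact absurd hB' hi
        · exact hc'
      let g1 : Fin n ⊕ Fin m → Fin n ⊕ (Fin k ⊕ Fin m) :=
        fun x => match x with
          | .inl x => .inl x
          | .inr i => if hi : b i ∈ B then .inr (.inr i)
              else .inr (.inl (Classical.choose (hj i hi)))
      have hcomp : ∀ a : Fin n → C,
          (Sum.elim a (Sum.elim c b') ∘ g1) = Sum.elim a b := by
        intro a
        funext x
        rcases x with x | i
        · rfl
        · by_cases hi : b i ∈ B
          · simp [g1, b', hi]
          · simpa [g1, b', hi] using Classical.choose_spec (hj i hi)
      obtain ⟨a₀, ha₀, hψ₀⟩ := hex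
      obtain ⟨a', ha', hre⟩ := key_lemma L Pr B hB c h n m (ψ.relabel g1) b' hb'
        ⟨a₀, ha₀, by rw [Formula.realize_relabel, hcomp a₀]; exact hψ₀⟩
      rw [Formula.realize_relabel, hcomp a'] at hre
      exact ⟨a', fun i => ⟨(ha' i).1, Or.inl (ha' i).2⟩, hre⟩

end Gaifman
end

section
/- Let A be λ-saturated and stable, A ⊆_t B, and N a λ-saturated model that is λ-atomic over A with N ⫝_A B. Then tp(N/A) ⊢ tp(N/B); in particular tp(N/A) and tp(B/A) are weakly orthogonal. -/
open FirstOrder FirstOrder.Language FirstOrder.Language.Structure Cardinal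

universe u

namespace Gaifman

variable (L : FirstOrder.Language.{u, u}) {C : Type u} [L.Structure C]

section Statement12Aux

lemma append_mem {S : Set C} {p q : ℕ} {u : Fin p → C} {v : Fin q → C}
    (hu : ∀ i, u i ∈ S) (hv : ∀ i, v i ∈ S) : ∀ i, Fin.append u v i ∈ S := by
  intro i
  induction i using Fin.addCases with
  | left i => rw [Fin.append_left]; exact hu i
  | right i => rw [Fin.append_right]; exact hv i

lemma realize_relabel_pair {k m : ℕ} (φ : L.Formula (Fin k ⊕ Fin m))
    (u : Fin k → C) (w : Fin m → C) (v0 : Fin 0 → C) :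
    ((φ.relabel (Sum.elim (fun i => Sum.inl (Fin.castAdd m i))
        (fun q => Sum.inl (Fin.natAdd k q)) : Fin k ⊕ Fin m → Fin (k + m) ⊕ Fin 0)).Realize
      (Sum.elim (Fin.append u w) v0)) ↔ φ.Realize (Sum.elim u w) := by
  rw [Formula.realize_relabel]
  refine iff_of_eq (congrArg _ ?_)
  funext z
  rcases z with i | q <;> simp

/-- The combination map: conjoin an element of the type of `d` with `¬φ(x̄,ȳ) ∧ Ψ(ȳ,a)`. -/
def Fcomb {k m m' : ℕ} (φ : L.Formula (Fin k ⊕ Fin m)) (Ψ : L.Formula (Fin m ⊕ Fin m'))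
    (a : Fin m' → C) :
    (Σ mi : ℕ, L.Formula (Fin k ⊕ Fin mi) × (Fin mi → C)) →
      (Σ mi : ℕ, L.Formula (Fin (k + m) ⊕ Fin mi) × (Fin mi → C)) :=
  fun x => ⟨x.1 + m',
    (x.2.1.relabel (Sum.elim (fun i => Sum.inl (Fin.castAdd m i))
        (fun p => Sum.inr (Fin.castAdd m' p))) ⊓
      (((φ.relabel (Sum.elim (fun i => Sum.inl (Fin.castAdd m i))
          (fun q => Sum.inl (Fin.natAdd k q)))).not) ⊓
        Ψ.relabel (Sum.elim (fun q => Sum.inl (Fin.natAdd k q))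
          (fun t => Sum.inr (Fin.natAdd x.1 t)))),
    Fin.append x.2.2 a)⟩

lemma realize_Fcomb {k m m' : ℕ} (φ : L.Formula (Fin k ⊕ Fin m))
    (Ψ : L.Formula (Fin m ⊕ Fin m')) (a : Fin m' → C)
    (x : Σ mi : ℕ, L.Formula (Fin k ⊕ Fin mi) × (Fin mi → C)) (v : Fin (k + m) → C) :
    ((Fcomb L φ Ψ a x).2.1).Realize (Sum.elim v (Fcomb L φ Ψ a x).2.2) ↔
      (x.2.1.Realize (Sum.elim (v ∘ Fin.castAdd m) x.2.2) ∧
        ¬ φ.Realize (Sum.elim (v ∘ Fin.castAdd m) (v ∘ Fin.natAdd k)) ∧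
        Ψ.Realize (Sum.elim (v ∘ Fin.natAdd k) a)) := by
  obtain ⟨mi, θ, e⟩ := x
  simp only [Fcomb, Formula.realize_inf, Formula.realize_not, Formula.realize_relabel]
  have h1 : (Sum.elim v (Fin.append e a)) ∘
      (Sum.elim (fun i => Sum.inl (Fin.castAdd m i)) (fun p => Sum.inr (Fin.castAdd m' p)) :
        Fin k ⊕ Fin mi → Fin (k + m) ⊕ Fin (mi + m')) = Sum.elim (v ∘ Fin.castAdd m) e := by
    funext z; rcases z with i | p <;> simp
  have h2 : (Sum.elim v (Fin.append e a)) ∘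
      (Sum.elim (fun i => Sum.inl (Fin.castAdd m i)) (fun q => Sum.inl (Fin.natAdd k q)) :
        Fin k ⊕ Fin m → Fin (k + m) ⊕ Fin (mi + m')) =
        Sum.elim (v ∘ Fin.castAdd m) (v ∘ Fin.natAdd k) := by
    funext z; rcases z with i | q <;> simp
  have h3 : (Sum.elim v (Fin.append e a)) ∘
      (Sum.elim (fun q => Sum.inl (Fin.natAdd k q)) (fun t => Sum.inr (Fin.natAdd mi t)) :
        Fin m ⊕ Fin m' → Fin (k + m) ⊕ Fin (mi + m')) = Sum.elim (v ∘ Fin.natAdd k) a := by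
    funext z; rcases z with q | t <;> simp
  rw [h1, h2, h3]

/-- Core lemma: if `tp(d/A)` is λ-isolated, the `Ψ,a`-scheme defines the `φ`-type of `d`
over `A`, `Ψ(c,a)` holds, and `d'` has the same type as `d` over `A`, then `φ(d',c)`. -/
lemma core (lam : Cardinal.{u}) (A Ns : Set C)
    (hsatA : IsLamCompact L lam A) (hANs : A ⊆ Ns)
    (hatomic : ∀ (k : ℕ) (d : Fin k → C), (∀ i, d i ∈ Ns) →
      ∃ B₀ ⊆ A, #B₀ < lam ∧ LamIsolatedTpOver L lam A B₀ d)
    {k m : ℕ} (d d' : Fin k → C) (c : Fin m → C)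
    (hd : ∀ i, d i ∈ Ns) (hdd' : SameTpOver L A d d')
    (φ : L.Formula (Fin k ⊕ Fin m))
    {m' : ℕ} (Ψ : L.Formula (Fin m ⊕ Fin m')) (a : Fin m' → C) (ha : ∀ i, a i ∈ A)
    (hdef : ∀ e : Fin m → C, (∀ i, e i ∈ A) →
      (φ.Realize (Sum.elim d e) ↔ Ψ.Realize (Sum.elim e a)))
    (hΨ : Ψ.Realize (Sum.elim c a)) : φ.Realize (Sum.elim d' c) := by
  obtain ⟨B₀, hB₀A, -, r, hrTp, hrB₀, hrcard, hrimp⟩ := hatomic k d hd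
  by_cases hlam : 1 < lam
  · -- main case : use λ-compactness of A
    by_contra hnφ
    obtain ⟨r₀, hr₀ne, hr₀A, hr₀d', hr₀imp, hr₀card⟩ :
        ∃ r₀ : Set (Σ mi : ℕ, L.Formula (Fin k ⊕ Fin mi) × (Fin mi → C)),
          r₀.Nonempty ∧
          (∀ x ∈ r₀, ∀ i, x.2.2 i ∈ A) ∧
          (∀ x ∈ r₀, x.2.1.Realize (Sum.elim d' x.2.2)) ∧
          (∀ c'' : Fin k → C, (∀ x ∈ r₀, x.2.1.Realize (Sum.elim c'' x.2.2)) →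
            ∀ x ∈ TpSet L A d, x.2.1.Realize (Sum.elim c'' x.2.2)) ∧
          #r₀ < lam := by
      rcases Set.eq_empty_or_nonempty r with he | hne
      · refine ⟨{⟨0, ⊤, finZeroElim⟩}, Set.singleton_nonempty _, ?_, ?_, ?_, ?_⟩
        · intro x hx i
          rw [Set.mem_singleton_iff] at hx
          subst hx
          exact i.elim0
        · intro x hx
          rw [Set.mem_singleton_iff] at hx
          subst hx
          simp
        · intro c'' _
          exact hrimp c'' (by simp [he])
        · rwa [Cardinal.mk_singleton]
      · refine ⟨r, hne, fun x hx i => hB₀A (hrB₀ x hx i), ?_, hrimp, hrcard⟩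
        intro x hx
        have hmem := hrTp hx
        exact (hdd' x.1 x.2.1 x.2.2 hmem.1).mp hmem.2
    have hΓreal : ∀ (v : Fin (k + m) → C),
        (∀ x ∈ r₀, x.2.1.Realize (Sum.elim (v ∘ Fin.castAdd m) x.2.2)) →
        ¬ φ.Realize (Sum.elim (v ∘ Fin.castAdd m) (v ∘ Fin.natAdd k)) →
        Ψ.Realize (Sum.elim (v ∘ Fin.natAdd k) a) →
        ∀ y ∈ Fcomb L φ Ψ a '' r₀, y.2.1.Realize (Sum.elim v y.2.2) := by
      rintro v h1 h2 h3 y ⟨x, hx, rfl⟩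
      exact (realize_Fcomb L φ Ψ a x v).mpr ⟨h1 x hx, h2, h3⟩
    obtain ⟨w, hwA, hw⟩ := hsatA (k + m) (Fcomb L φ Ψ a '' r₀)
      (by
        rintro y ⟨x, hx, rfl⟩ i
        exact append_mem (hr₀A x hx) ha i)
      (lt_of_le_of_lt Cardinal.mk_image_le hr₀card)
      (by
        refine ⟨Fin.append d' c, hΓreal (Fin.append d' c) ?_ ?_ ?_⟩ <;>
          simp only [show (Fin.append d' c ∘ Fin.castAdd m) = d' from
              funext fun i => Fin.append_left _ _ i,
            show (Fin.append d' c ∘ Fin.natAdd k) = c from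
              funext fun i => Fin.append_right _ _ i]
        · exact hr₀d'
        · exact hnφ
        · exact hΨ)
    set d'' : Fin k → C := w ∘ Fin.castAdd m with hd''
    set c'' : Fin m → C := w ∘ Fin.natAdd k with hc''
    have hc''A : ∀ i, c'' i ∈ A := fun i => hwA _
    have hcomp : ∀ x ∈ r₀, (x.2.1.Realize (Sum.elim d'' x.2.2) ∧
        ¬ φ.Realize (Sum.elim d'' c'') ∧ Ψ.Realize (Sum.elim c'' a)) := by
      intro x hx
      exact (realize_Fcomb L φ Ψ a x w).mp (hw _ (Set.mem_image_of_mem _ hx))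
    obtain ⟨x₀, hx₀⟩ := hr₀ne
    have hnot := (hcomp x₀ hx₀).2.1
    have hΨ'' := (hcomp x₀ hx₀).2.2
    have hall := hr₀imp d'' (fun x hx => (hcomp x hx).1)
    have hφd : φ.Realize (Sum.elim d c'') := (hdef c'' hc''A).mpr hΨ''
    exact hnot (hall ⟨m, φ, c''⟩ ⟨hc''A, hφd⟩)
  · -- degenerate case : lam ≤ 1
    have hlam1 : lam ≤ 1 := not_lt.mp hlam
    rcases Nat.eq_zero_or_pos m with hm | hm
    · subst hm
      have h1 : φ.Realize (Sum.elim d c) := (hdef c (fun i => i.elim0)).mpr hΨ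
      exact (hdd' 0 φ c (fun i => i.elim0)).mp h1
    · have h0lam : 0 < lam := lt_of_le_of_lt zero_le hrcard
      obtain ⟨c1, hc1A, -⟩ := hsatA 1 ∅ (fun x hx => absurd hx (Set.notMem_empty x))
        (by simpa using h0lam)
        ⟨fun _ => c ⟨0, hm⟩, fun x hx => absurd hx (Set.notMem_empty x)⟩
      have ha₀ : c1 0 ∈ A := hc1A 0
      have allSame : ∀ (K : ℕ) (u u' : Fin K → C), SameTpOver L A u u' := by
        intro K u u'
        obtain ⟨B₁, -, -, r₁, hr₁Tp, -, hr₁card, hr₁imp⟩ :=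
          hatomic K (fun _ => c1 0) (fun _ => hANs ha₀)
        have hr₁e : r₁ = ∅ := by
          have h2 : #r₁ < 1 := lt_of_lt_of_le hr₁card hlam1
          rwa [Cardinal.lt_one_iff_zero, Cardinal.mk_eq_zero_iff, Set.isEmpty_coe_sort] at h2
        have hu := hr₁imp u (by simp [hr₁e])
        have hu' := hr₁imp u' (by simp [hr₁e])
        intro m₁ ψ b hb
        by_cases hψ : ψ.Realize (Sum.elim (fun _ => c1 0) b)
        · exact iff_of_true (hu ⟨m₁, ψ, b⟩ ⟨hb, hψ⟩) (hu' ⟨m₁, ψ, b⟩ ⟨hb, hψ⟩)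
        · exact iff_of_false (hu ⟨m₁, ψ.not, b⟩ ⟨hb, hψ⟩) (hu' ⟨m₁, ψ.not, b⟩ ⟨hb, hψ⟩)
      have hΨ'' : Ψ.Realize (Sum.elim (fun _ => c1 0 : Fin m → C) a) :=
        (allSame m c (fun _ => c1 0) m' Ψ a ha).mp hΨ
      have hφd : φ.Realize (Sum.elim d (fun _ => c1 0)) :=
        (hdef _ (fun _ => ha₀)).mpr hΨ''
      have h5 := (allSame (k + m) (Fin.append d (fun _ => c1 0)) (Fin.append d' c) 0
        (φ.relabel (Sum.elim (fun i => Sum.inl (Fin.castAdd m i))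
          (fun q => Sum.inl (Fin.natAdd k q)))) finZeroElim (fun i => i.elim0)).mp
        ((realize_relabel_pair L φ d (fun _ => c1 0) finZeroElim).mpr hφd)
      exact (realize_relabel_pair L φ d' c finZeroElim).mp h5

lemma realize_phat {k m j : ℕ} (φ : L.Formula ((Fin k ⊕ Fin m) ⊕ Fin j)) (d : Fin k → C)
    (b : Fin m → C) (a : Fin j → C) :
    (φ.relabel (Sum.elim (Sum.elim (fun i => Sum.inl i) (fun p => Sum.inr (Fin.castAdd j p)))
      (fun q => Sum.inr (Fin.natAdd m q)) :
        ((Fin k ⊕ Fin m) ⊕ Fin j) → Fin k ⊕ Fin (m + j))).Realize (Sum.elim d (Fin.append b a)) ↔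
      φ.Realize (Sum.elim (Sum.elim d b) a) := by
  rw [Formula.realize_relabel]
  refine iff_of_eq (congrArg _ ?_)
  funext z
  rcases z with (i | p) | q <;> simp

lemma realize_psihat {m j m'' : ℕ} (Ψ : L.Formula (Fin (m + j) ⊕ Fin m''))
    (b : Fin m → C) (a : Fin j → C) (a' : Fin m'' → C) :
    (Ψ.relabel (Sum.elim (Fin.addCases (fun p => Sum.inl p)
        (fun q => Sum.inr (Fin.castAdd m'' q)))
      (fun t => Sum.inr (Fin.natAdd j t)) :
        Fin (m + j) ⊕ Fin m'' → Fin m ⊕ Fin (j + m''))).Realize (Sum.elim b (Fin.append a a')) ↔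
      Ψ.Realize (Sum.elim (Fin.append b a) a') := by
  rw [Formula.realize_relabel]
  refine iff_of_eq (congrArg _ ?_)
  funext z
  rcases z with i | t
  · induction i using Fin.addCases with
    | left p => simp
    | right q => simp
  · simp

set_option maxHeartbeats 1000000 in
/-- Master transfer lemma: one direction of Statement 12. -/
lemma master (lam : Cardinal.{u}) (A B Ns : Set C)
    (hsatA : IsLamCompact L lam A) (hAB : A ⊆ B) (hANs : A ⊆ Ns)
    (hatomic : ∀ (k : ℕ) (d : Fin k → C), (∀ i, d i ∈ Ns) →
      ∃ B₀ ⊆ A, #B₀ < lam ∧ LamIsolatedTpOver L lam A B₀ d)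
    (hind : IndepOver L A B Ns)
    {k m j : ℕ} (d d' : Fin k → C) (b b' : Fin m → C) (a : Fin j → C)
    (hd : ∀ i, d i ∈ Ns) (hb : ∀ i, b i ∈ B) (ha : ∀ i, a i ∈ A)
    (hdd' : SameTpOver L A d d') (hbb' : SameTpOver L A b b')
    (φ : L.Formula ((Fin k ⊕ Fin m) ⊕ Fin j))
    (hφ : φ.Realize (Sum.elim (Sum.elim d b) a)) :
    φ.Realize (Sum.elim (Sum.elim d' b') a) := by
  obtain ⟨m'', Ψ, a', ha', hdefA, hdefB⟩ := hind k d hd (m + j)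
    (φ.relabel (Sum.elim (Sum.elim (fun i => Sum.inl i) (fun p => Sum.inr (Fin.castAdd j p)))
      (fun q => Sum.inr (Fin.natAdd m q))))
  have hba : ∀ i, Fin.append b a i ∈ B := append_mem hb (fun i => hAB (ha i))
  have h1 : Ψ.Realize (Sum.elim (Fin.append b a) a') :=
    (hdefB (Fin.append b a) hba).mp ((realize_phat L φ d b a).mpr hφ)
  have h2 : Ψ.Realize (Sum.elim (Fin.append b' a) a') := by
    have h3 := (hbb' (j + m'') (Ψ.relabel (Sum.elim (Fin.addCases (fun p => Sum.inl p)
        (fun q => Sum.inr (Fin.castAdd m'' q))) (fun t => Sum.inr (Fin.natAdd j t))))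
        (Fin.append a a') (append_mem ha ha')).mp ((realize_psihat L Ψ b a a').mpr h1)
    exact (realize_psihat L Ψ b' a a').mp h3
  exact (realize_phat L φ d' b' a).mp
    (core L lam A Ns hsatA hANs hatomic d d' (Fin.append b' a) hd hdd' _ Ψ a' ha' hdefA h2)

end Statement12Aux

/-- if `A` is `λ`-saturated and stable, `A ⊆_t B`, and `N` is a
`λ`-saturated model `λ`-atomic over `A` with `N ⫝_A B`, then `tp(N/A) ⊢ tp(N/B)`;
in particular `tp(N/A)` and `tp(B/A)` are weakly orthogonal. -/
theorem statement_12 (Pr : L.Relations 1) (hf : ∀ n, IsEmpty (L.Functions n))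
    (hVSE : VeryStablyEmbedded (C := C) L hf Pr) (hMS : AllModelsStable (C := C) L hf Pr)
    (lam : Cardinal.{u}) (A B : Set C)
    (hsatA : IsLamCompact L lam A) (hstable : IsStable L hf Pr A)
    (hAB : A ⊆ B) (ht : SubT L A B)
    (N : L.ElementarySubstructure C) (hAN : A ⊆ ((N : L.Substructure C) : Set C))
    (hsatN : IsLamCompact L lam ((N : L.Substructure C) : Set C))
    (hatomic : ∀ (k : ℕ) (d : Fin k → C), (∀ i, d i ∈ ((N : L.Substructure C) : Set C)) →
      ∃ B₀ ⊆ A, #B₀ < lam ∧ LamIsolatedTpOver L lam A B₀ d)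
    (hind : IndepOver L A B ((N : L.Substructure C) : Set C)) :
    (∀ (k : ℕ) (d d' : Fin k → C), (∀ i, d i ∈ ((N : L.Substructure C) : Set C)) →
      SameTpOver L A d d' → SameTpOver L B d d') ∧
    (∀ (k m : ℕ) (d : Fin k → C) (b : Fin m → C),
      (∀ i, d i ∈ ((N : L.Substructure C) : Set C)) → (∀ i, b i ∈ B) →
      ∀ (d' : Fin k → C) (b' : Fin m → C), SameTpOver L A d d' → SameTpOver L A b b' →
        ∀ (j : ℕ) (φ : L.Formula ((Fin k ⊕ Fin m) ⊕ Fin j)) (a : Fin j → C),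
          (∀ i, a i ∈ A) →
          (φ.Realize (Sum.elim (Sum.elim d b) a) ↔
            φ.Realize (Sum.elim (Sum.elim d' b') a))) := by
  constructor
  · intro k d d' hd hsame m φ b hb
    have fwd : ∀ (ψ : L.Formula (Fin k ⊕ Fin m)) (e e' : Fin k → C),
        (∀ i, e i ∈ ((N : L.Substructure C) : Set C)) → SameTpOver L A e e' →
        ψ.Realize (Sum.elim e b) → ψ.Realize (Sum.elim e' b) := by
      intro ψ e e' he hee' h
      have h0 : (ψ.relabel (Sum.inl : (Fin k ⊕ Fin m) → (Fin k ⊕ Fin m) ⊕ Fin 0)).Realize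
          (Sum.elim (Sum.elim e b) finZeroElim) := by
        rw [Formula.realize_relabel, Sum.elim_comp_inl]
        exact h
      have h1 := master L lam A B _ hsatA hAB hAN hatomic hind e e' b b finZeroElim he hb
        (fun i => i.elim0) hee' (fun _ _ _ _ => Iff.rfl) _ h0
      rw [Formula.realize_relabel, Sum.elim_comp_inl] at h1
      exact h1
    constructor
    · exact fwd φ d d' hd hsame
    · intro h
      by_contra hn
      exact fwd φ.not d d' hd hsame hn h
  · intro k m d b hd hb d' b' hdd' hbb' j φ a ha
    constructor
    · exact master L lam A B _ hsatA hAB hAN hatomic hind d d' b b' a hd hb ha hdd' hbb' φ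
    · intro h
      by_contra hn
      exact master L lam A B _ hsatA hAB hAN hatomic hind d d' b b' a hd hb ha hdd' hbb'
        φ.not hn h


end Gaifman
end

section
/- If ⟨A_s : s ∈ I⟩ is a good system and 0 = l_0 < l_1 < … < l_{m−1} < n_I, set J = { v ⊆ m : {l_i : i ∈ v} ∈ I } and B_v = A_{{l_i : i ∈ v}}. Then ⟨B_v : v ∈ J⟩ is a good system. -/
open FirstOrder FirstOrder.Language FirstOrder.Language.Structure Cardinal

universe u

namespace Gaifman

variable (L : FirstOrder.Language.{u, u}) {C : Type u} [L.Structure C]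

section Restrict

lemma sum_term_var (hf : ∀ n, IsEmpty (L.Functions n)) {α : Type*} (t : (L.sum sysLang).Term α) : ∃ i, t = Term.var i := by
  cases t with
  | var i => exact ⟨i, rfl⟩
  | func f ts =>
    rcases f with f | f
    · exact ((hf _).elim f)
    · exact f.elim

/-- Renaming of `sysLang` relations along `Finset.image l`. -/
def mapSysRel (l : ℕ → ℕ) : ∀ {k}, sysLang.Relations k → sysLang.Relations k
  | 1, t => Finset.image l t
  | 0, t => t
  | _ + 2, t => t

/-- Renaming of relations of the expanded language. -/
def transRel (l : ℕ → ℕ) : ∀ {k}, (L.sum sysLang).Relations k → (L.sum sysLang).Relations k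
  | _, .inl r => .inl r
  | _, .inr r => .inr (mapSysRel l r)

/-- Rename relations along `l` and relativize all quantifiers to the predicate `S`. -/
def trans (l : ℕ → ℕ) (S : Finset ℕ) {α : Type*} :
    ∀ {d}, (L.sum sysLang).BoundedFormula α d → (L.sum sysLang).BoundedFormula α d
  | _, .falsum => .falsum
  | _, .equal t₁ t₂ => .equal t₁ t₂
  | _, .rel R ts => .rel (transRel L l R) ts
  | _, .imp f g => .imp (trans l S f) (trans l S g)
  | d, .all f => .all ((Relations.boundedFormula₁
      (Sum.inr S : (L.sum sysLang).Relations 1)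
      (Term.var (Sum.inr (Fin.last d)))).imp (trans l S f))

lemma trans_realize (hf : ∀ n, IsEmpty (L.Functions n)) (l : ℕ → ℕ)
    (A : Finset ℕ → Set C) (U D : Set C) (S : Finset ℕ)
    (hD : D ⊆ U) (hDS : ∀ x ∈ U, x ∈ A S ↔ x ∈ D)
    {α : Type*} {d : ℕ} (φ : (L.sum sysLang).BoundedFormula α d)
    (v : α → ↥(setSub L hf D)) (xs : Fin d → ↥(setSub L hf D))
    (v' : α → ↥(setSub L hf U)) (xs' : Fin d → ↥(setSub L hf U))
    (hv : ∀ i, (v' i : C) = (v i : C)) (hxs : ∀ i, (xs' i : C) = (xs i : C)) :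
    (letI := sysStruc L hf (fun t => A (t.image l)) D
     φ.Realize v xs) ↔
    (letI := sysStruc L hf A U
     (trans L l S φ).Realize v' xs') := by
  letI := sysStruc L hf (fun t => A (t.image l)) D
  letI := sysStruc L hf A U
  induction φ with
  | falsum => exact Iff.rfl
  | @equal d t₁ t₂ =>
    show (t₁.realize _ = t₂.realize _) ↔ (t₁.realize _ = t₂.realize _)
    have e : ∀ t : (L.sum sysLang).Term (α ⊕ Fin d),
        ((t.realize (Sum.elim v' xs') : ↥(setSub L hf U)) : C) =
          ((t.realize (Sum.elim v xs) : ↥(setSub L hf D)) : C) := by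
      intro t
      obtain ⟨i, rfl⟩ := sum_term_var L hf t
      cases i with
      | inl i => exact hv i
      | inr i => exact hxs i
    rw [Subtype.ext_iff, Subtype.ext_iff, e t₁, e t₂]
  | @rel d k R ts =>
    show RelMap R _ ↔ RelMap (transRel L l R) _
    have e : ∀ i, (((ts i).realize (Sum.elim v' xs') : ↥(setSub L hf U)) : C) =
        (((ts i).realize (Sum.elim v xs) : ↥(setSub L hf D)) : C) := by
      intro i
      obtain ⟨j, hj⟩ := sum_term_var L hf (ts i)
      rw [hj]
      cases j with
      | inl j => exact hv j
      | inr j => exact hxs j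
    rcases R with r | r
    · show RelMap r (fun i => (((ts i).realize (Sum.elim v xs) : ↥(setSub L hf D)) : C)) ↔
        RelMap r (fun i => (((ts i).realize (Sum.elim v' xs') : ↥(setSub L hf U)) : C))
      rw [funext e]
    · match k, r with
      | 1, t =>
        show (((ts 0).realize (Sum.elim v xs) : ↥(setSub L hf D)) : C) ∈ A (t.image l) ↔
          (((ts 0).realize (Sum.elim v' xs') : ↥(setSub L hf U)) : C) ∈ A (t.image l)
        rw [e 0]
  | @imp d f g ihf ihg =>
    show (_ → _) ↔ (_ → _)
    exact imp_congr (ihf xs xs' hxs) (ihg xs xs' hxs)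
  | @all d f ih =>
    show (∀ _, _) ↔ (∀ _, _)
    constructor
    · intro h b
      intro hb
      have hbS : (b : C) ∈ A S := by
        erw [BoundedFormula.realize_rel₁] at hb
        simp only [Term.realize_var, Sum.elim_inr, Fin.snoc_last] at hb
        exact hb
      have hbD : (b : C) ∈ D := (hDS _ b.2).1 hbS
      refine (ih (Fin.snoc xs ⟨(b : C), hbD⟩) (Fin.snoc xs' b) ?_).1
        (h ⟨(b : C), hbD⟩)
      intro i
      refine Fin.lastCases ?_ ?_ i
      · simp
      · intro j
        simp [hxs j]
    · intro h a
      have haS : ((a : C)) ∈ A S := (hDS _ (hD a.2)).2 a.2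
      have h2 := h ⟨(a : C), hD a.2⟩ ?_
      · refine (ih (Fin.snoc xs a) (Fin.snoc xs' ⟨(a : C), hD a.2⟩) ?_).2 h2
        intro i
        refine Fin.lastCases ?_ ?_ i
        · simp
        · intro j
          simp [hxs j]
      · erw [BoundedFormula.realize_rel₁]
        simp only [Term.realize_var, Sum.elim_inr, Fin.snoc_last]
        exact haS

lemma sysRealize_trans (hf : ∀ n, IsEmpty (L.Functions n)) (l : ℕ → ℕ)
    (A : Finset ℕ → Set C) (U D : Set C) (S : Finset ℕ)
    (hD : D ⊆ U) (hDS : ∀ x ∈ U, x ∈ A S ↔ x ∈ D)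
    {k : ℕ} (φ : (L.sum sysLang).Formula (Fin k)) (v : Fin k → C) (hv : ∀ i, v i ∈ D) :
    SysRealize L hf (fun t => A (t.image l)) D φ v ↔
      SysRealize L hf A U (trans L l S φ) v := by
  constructor
  · rintro ⟨hv', h⟩
    refine ⟨fun i => hD (hv' i), ?_⟩
    exact (trans_realize L hf l A U D S hD hDS φ (fun i => ⟨v i, hv' i⟩) default
      (fun i => ⟨v i, hD (hv' i)⟩) default (fun i => rfl) (fun i => i.elim0)).1 h
  · rintro ⟨hv', h⟩
    refine ⟨hv, ?_⟩
    exact (trans_realize L hf l A U D S hD hDS φ (fun i => ⟨v i, hv i⟩) default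
      (fun i => ⟨v i, hD (hv i)⟩) default (fun i => rfl) (fun i => i.elim0)).2 h

lemma inter_mono {K : Set (Finset ℕ)} {A : Finset ℕ → Set C}
    (hint : ∀ s ∈ K, ∀ t ∈ K, A s ∩ A t = A (s ∩ t)) {s t : Finset ℕ}
    (hs : s ∈ K) (ht : t ∈ K) (hst : s ⊆ t) : A s ⊆ A t := by
  intro x hx
  have h := hint s hs t ht
  rw [Finset.inter_eq_left.mpr hst] at h
  rw [← h] at hx
  exact hx.2

lemma sysUnion_powerset (A : Finset ℕ → Set C) (u : Finset ℕ)
    (hmono : ∀ s, s ⊆ u → A s ⊆ A u) : SysUnion {s | s ⊆ u} A = A u := by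
  apply Set.Subset.antisymm
  · exact Set.iUnion₂_subset hmono
  · exact Set.subset_biUnion_of_mem (u := A) (show u ∈ {s : Finset ℕ | s ⊆ u} from Set.mem_setOf_eq ▸ Finset.Subset.refl _)

lemma sysElemSub_transfer (hf : ∀ n, IsEmpty (L.Functions n)) (l : ℕ → ℕ)
    (hmono : StrictMono l) (A : Finset ℕ → Set C) (n0 n'' m'' : ℕ)
    (hrange : ∀ i, 1 ≤ i → i ≤ m'' → 1 ≤ l i ∧ l i ≤ n'')
    (hsub : SysElemSub L hf {s | s ⊆ Finset.Icc 1 n''} A (fun s => A (insert n0 s)))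
    (hint : ∀ s ∈ {s : Finset ℕ | s ⊆ Finset.Icc 1 n''}, ∀ t ∈ {s : Finset ℕ | s ⊆ Finset.Icc 1 n''},
      A s ∩ A t = A (s ∩ t))
    (hint₁ : ∀ s ∈ {s : Finset ℕ | s ⊆ Finset.Icc 1 n''}, ∀ t ∈ {s : Finset ℕ | s ⊆ Finset.Icc 1 n''},
      A (insert n0 s) ∩ A (insert n0 t) = A (insert n0 (s ∩ t))) :
    SysElemSub L hf {s | s ⊆ Finset.Icc 1 m''} (fun v => A (v.image l))
      (fun v => A (insert n0 (v.image l))) := by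
  set S : Finset ℕ := (Finset.Icc 1 m'').image l with hSdef
  have hS : S ⊆ Finset.Icc 1 n'' := by
    intro j hj
    rw [hSdef] at hj
    obtain ⟨i, hi, rfl⟩ := Finset.mem_image.1 hj
    rw [Finset.mem_Icc] at hi
    rw [Finset.mem_Icc]
    exact hrange i hi.1 hi.2
  have himg : ∀ v : Finset ℕ, v ⊆ Finset.Icc 1 m'' → v.image l ⊆ S :=
    fun v hv => Finset.image_subset_image hv
  have himgI : ∀ v : Finset ℕ, v ⊆ Finset.Icc 1 m'' → v.image l ∈ {s : Finset ℕ | s ⊆ Finset.Icc 1 n''} :=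
    fun v hv => (himg v hv).trans hS
  have hSI : S ∈ {s : Finset ℕ | s ⊆ Finset.Icc 1 n''} := hS
  have hAmono : ∀ v : Finset ℕ, v ⊆ Finset.Icc 1 m'' → A (v.image l) ⊆ A S :=
    fun v hv => inter_mono hint (himgI v hv) hSI (himg v hv)
  have hA1mono : ∀ v : Finset ℕ, v ⊆ Finset.Icc 1 m'' →
      A (insert n0 (v.image l)) ⊆ A (insert n0 S) :=
    fun v hv => inter_mono (A := fun s => A (insert n0 s)) hint₁ (himgI v hv) hSI (himg v hv)
  have hU : SysUnion {s | s ⊆ Finset.Icc 1 m''} (fun v => A (v.image l)) = A S := by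
    apply Set.Subset.antisymm
    · exact Set.iUnion₂_subset hAmono
    · exact Set.subset_biUnion_of_mem (u := fun v => A (v.image l))
        (show Finset.Icc 1 m'' ∈ {s : Finset ℕ | s ⊆ Finset.Icc 1 m''} from Set.mem_setOf_eq ▸ Finset.Subset.refl _)
  have hU₁ : SysUnion {s | s ⊆ Finset.Icc 1 m''} (fun v => A (insert n0 (v.image l))) =
      A (insert n0 S) := by
    apply Set.Subset.antisymm
    · exact Set.iUnion₂_subset hA1mono
    · exact Set.subset_biUnion_of_mem (u := fun v => A (insert n0 (v.image l)))
        (show Finset.Icc 1 m'' ∈ {s : Finset ℕ | s ⊆ Finset.Icc 1 m''} from Set.mem_setOf_eq ▸ Finset.Subset.refl _)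
  have hUA : SysUnion {s | s ⊆ Finset.Icc 1 n''} A = A (Finset.Icc 1 n'') :=
    sysUnion_powerset A _ (fun s hs => inter_mono hint hs (Set.mem_setOf_eq ▸ Finset.Subset.refl _) hs)
  have hUA₁ : SysUnion {s | s ⊆ Finset.Icc 1 n''} (fun s => A (insert n0 s)) =
      A (insert n0 (Finset.Icc 1 n'')) :=
    sysUnion_powerset (fun s => A (insert n0 s)) _
      (fun s hs => inter_mono (A := fun s => A (insert n0 s)) hint₁ hs (Set.mem_setOf_eq ▸ Finset.Subset.refl _) hs)
  have hDU : A S ⊆ A (Finset.Icc 1 n'') := inter_mono hint hSI (Set.mem_setOf_eq ▸ Finset.Subset.refl _) hS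
  have hDU₁ : A (insert n0 S) ⊆ A (insert n0 (Finset.Icc 1 n'')) :=
    inter_mono (A := fun s => A (insert n0 s)) hint₁ hSI (Set.mem_setOf_eq ▸ Finset.Subset.refl _) hS
  have hASS : A S ⊆ A (insert n0 S) := hsub.1 S hSI
  constructor
  · intro v hv
    exact hsub.1 (v.image l) (himgI v hv)
  · intro k φ v hv
    rw [hU] at hv
    rw [hU, hU₁]
    have e1 := sysRealize_trans L hf l A (A (Finset.Icc 1 n'')) (A S) S hDU
      (fun x _ => Iff.rfl) φ v hv
    have e2 := sysRealize_trans L hf l (fun s => A (insert n0 s))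
      (A (insert n0 (Finset.Icc 1 n''))) (A (insert n0 S)) S hDU₁
      (fun x _ => Iff.rfl) φ v (fun i => hASS (hv i))
    refine Iff.trans e1 (Iff.trans ?_ e2.symm)
    have h := hsub.2 k (trans L l S φ) v (fun i => by rw [hUA]; exact hDU (hv i))
    rw [hUA, hUA₁] at h
    exact h

lemma mem_image_zero {l : ℕ → ℕ} (hmono : StrictMono l) (h0 : l 0 = 0) {v : Finset ℕ} :
    0 ∈ v.image l ↔ 0 ∈ v := by
  constructor
  · intro h
    obtain ⟨i, hi, hli⟩ := Finset.mem_image.1 h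
    have : i = 0 := hmono.injective (by rw [hli, h0])
    rwa [this] at hi
  · intro h
    rw [← h0]
    exact Finset.mem_image_of_mem l h

lemma lexLt_image {l : ℕ → ℕ} (hmono : StrictMono l) {s t : Finset ℕ} (h : lexLt s t) :
    lexLt (s.image l) (t.image l) := by
  obtain ⟨k, hkt, hks, hagree⟩ := h
  refine ⟨l k, Finset.mem_image_of_mem l hkt, ?_, ?_⟩
  · intro hmem
    obtain ⟨i, hi, hli⟩ := Finset.mem_image.1 hmem
    exact hks (hmono.injective hli ▸ hi)
  · intro j hj
    constructor
    · intro hmem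
      obtain ⟨i, hi, rfl⟩ := Finset.mem_image.1 hmem
      have hik : i < k := hmono.lt_iff_lt.1 hj
      exact Finset.mem_image_of_mem l ((hagree i hik).1 hi)
    · intro hmem
      obtain ⟨i, hi, rfl⟩ := Finset.mem_image.1 hmem
      have hik : i < k := hmono.lt_iff_lt.1 hj
      exact Finset.mem_image_of_mem l ((hagree i hik).2 hi)

lemma gs0_congr (Pr : L.Relations 1) (hf : ∀ n, IsEmpty (L.Functions n))
    {K K' : Set (Finset ℕ)} {A A' : Finset ℕ → Set C}
    (hK : ∀ s, s ∈ K' ↔ s ∈ K) (hA : A' ∅ = A ∅)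
    (h : GS L Pr hf 0 K A) : GS L Pr hf 0 K' A' := by
  simp only [GS] at h ⊢
  obtain ⟨hN, hWG, hStab⟩ := h
  have hKe : ∀ s, s ∈ K → s = ∅ := by
    intro s hs
    have := hN.1.1 s hs
    simpa [Finset.subset_empty] using this
  have hKne : (∅ : Finset ℕ) ∈ K := hN.1.2.1 ∅ (by simp) (by simp)
  refine ⟨⟨⟨fun s hs => by rw [hKe s ((hK s).1 hs)]; simp,
    fun s hsub _ => by rw [Finset.range_zero, Finset.subset_empty] at hsub; rw [hsub, hK]; exact hKne,
    fun s hs t hts => by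
      rw [hKe s ((hK s).1 hs), Finset.subset_empty] at hts
      rw [hts, hK]; exact hKne⟩,
    fun s hs t htr _ => by
      rw [Finset.range_zero, Finset.subset_empty] at htr
      rw [htr, hK]; exact hKne⟩, ?_, ?_⟩
  · refine ⟨?_, ?_, ?_, ?_⟩
    · intro s hs t ht
      rw [hKe s ((hK s).1 hs), hKe t ((hK t).1 ht)]
      simpa [hA] using hWG.1 ∅ hKne ∅ hKne
    · intro s hs _
      rw [hKe s ((hK s).1 hs), hA]
      exact hWG.2.1 ∅ hKne (by simp)
    · intro s hs h0s
      rw [hKe s ((hK s).1 hs)] at h0s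
      simp at h0s
    · intro s hs
      rw [hKe s ((hK s).1 hs)]
      simpa [hA] using hWG.2.2.2 ∅ hKne
  · intro s hs h0s
    rw [hKe s ((hK s).1 hs)] at h0s
    simp at h0s

lemma restrict_main (Pr : L.Relations 1) (hf : ∀ n, IsEmpty (L.Functions n)) :
    ∀ (n : ℕ) (I : Set (Finset ℕ)) (A : Finset ℕ → Set C) (l : ℕ → ℕ) (m : ℕ),
      GS L Pr hf n I A → StrictMono l → l 0 = 0 → 0 < m → l (m - 1) < n →
      GS L Pr hf m {v | v ⊆ Finset.range m ∧ Finset.image l v ∈ I}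
        (fun v => A (Finset.image l v)) := by
  intro n
  induction n using Nat.strong_induction_on with
  | _ n IH =>
  intro I A l m hGS hmono h0 hm hlast
  have inj : Function.Injective l := hmono.injective
  obtain ⟨m0, rfl⟩ : ∃ m0, m = m0 + 1 := ⟨m - 1, by omega⟩
  simp only [Nat.add_sub_cancel] at hlast
  obtain ⟨n0, rfl⟩ : ∃ n0, n = n0 + 1 := ⟨n - 1, by omega⟩
  simp only [GS] at hGS
  obtain ⟨hNice, hWG, hStab, hV, hWit, hg6, hg7⟩ := hGS
  rcases Nat.lt_or_ge (l m0) n0 with hlt | hge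
  · -- Case A : the top coordinate n0 is not used; descend to the lower subsystem.
    have h6 := IH n0 (by omega) {s ∈ I | n0 ∉ s} A l (m0 + 1) hg6 hmono h0 hm
      (by simpa using hlt)
    have hset : {v : Finset ℕ | v ⊆ Finset.range (m0 + 1) ∧
        Finset.image l v ∈ {s ∈ I | n0 ∉ s}} =
        {v : Finset ℕ | v ⊆ Finset.range (m0 + 1) ∧ Finset.image l v ∈ I} := by
      ext v
      simp only [Set.mem_setOf_eq, Set.mem_sep_iff]
      constructor
      · rintro ⟨h1, h2, _⟩; exact ⟨h1, h2⟩
      · rintro ⟨h1, h2⟩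
        refine ⟨h1, h2, fun hmem => ?_⟩
        obtain ⟨i, hi, hli⟩ := Finset.mem_image.1 hmem
        have : i < m0 + 1 := Finset.mem_range.1 (h1 hi)
        have : l i ≤ l m0 := hmono.monotone (by omega)
        omega
    exact hset ▸ h6
  · -- Case B : l m0 = n0.
    have heq : l m0 = n0 := by omega
    have hmem0 : ∀ {v : Finset ℕ}, 0 ∈ v.image l ↔ 0 ∈ v := fun {v} => mem_image_zero hmono h0
    have himgrange : ∀ {v : Finset ℕ}, v ⊆ Finset.range (m0 + 1) →
        Finset.image l v ⊆ Finset.range (n0 + 1) := by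
      intro v hv j hj
      obtain ⟨i, hi, rfl⟩ := Finset.mem_image.1 hj
      have h1 : i < m0 + 1 := Finset.mem_range.1 (hv hi)
      have h2 : l i ≤ l m0 := hmono.monotone (by omega)
      exact Finset.mem_range.2 (by omega)
    simp only [GS]
    refine ⟨?_, ?_, ?_, ?_, ?_, ?_, ?_⟩
    · -- Nice
      exact ⟨⟨fun s hs => hs.1,
        fun s hsub h0s => ⟨hsub, hNice.1.2.1 _ (himgrange hsub)
          (fun h => h0s (hmem0.1 h))⟩,
        fun s hs t hts => ⟨hts.trans hs.1,
          hNice.1.2.2 _ hs.2 _ (Finset.image_subset_image hts)⟩⟩,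
        fun s hs t htr hlex => ⟨htr, hNice.2 _ hs.2 _ (himgrange htr)
          (lexLt_image hmono hlex)⟩⟩
    · -- WG
      refine ⟨fun s hs t ht => ?_, fun s hs h0s => ?_, fun s hs h0s => ?_, fun s hs => ?_⟩
      · show A (s.image l) ∩ A (t.image l) = A ((s ∩ t).image l)
        rw [Finset.image_inter s t inj]
        exact hWG.1 _ hs.2 _ ht.2
      · exact hWG.2.1 _ hs.2 (fun h => h0s (hmem0.1 h))
      · exact hWG.2.2.1 _ hs.2 (hmem0.2 h0s)
      · show A (s.image l) ∩ Pset L Pr = A ((s.erase 0).image l)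
        rw [Finset.image_erase inj, h0]
        exact hWG.2.2.2 _ hs.2
    · -- StabClause
      intro v hv h0v
      show IsStable L hf Pr (⋃ t ∈ {t : Finset ℕ | t ⊂ v}, A (t.image l))
      have hU : (⋃ t ∈ {t : Finset ℕ | t ⊂ v}, A (t.image l)) =
          ⋃ t ∈ {t : Finset ℕ | t ⊂ v.image l}, A t := by
        ext x
        simp only [Set.mem_iUnion, Set.mem_setOf_eq, exists_prop]
        constructor
        · rintro ⟨w, hw, hx⟩
          refine ⟨w.image l, ?_, hx⟩
          have h1 : w.image l ⊆ v.image l := Finset.image_subset_image hw.subset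
          have h2 : w.image l ≠ v.image l := fun he => hw.ne (Finset.image_injective inj he)
          exact Finset.ssubset_iff_subset_ne.2 ⟨h1, h2⟩
        · rintro ⟨t, ht, hx⟩
          classical
          refine ⟨v.filter (fun i => l i ∈ t), ?_, ?_⟩
          · have hft : (v.filter (fun i => l i ∈ t)).image l = t := by
              ext y
              simp only [Finset.mem_image, Finset.mem_filter]
              constructor
              · rintro ⟨i, ⟨_, hit⟩, rfl⟩; exact hit
              · intro hy
                obtain ⟨i, hi, rfl⟩ := Finset.mem_image.1 (ht.subset hy)
                exact ⟨i, ⟨hi, hy⟩, rfl⟩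
            refine Finset.ssubset_iff_subset_ne.2 ⟨Finset.filter_subset _ _, fun he => ?_⟩
            rw [he] at hft
            exact ht.ne hft.symm
          · have hft : (v.filter (fun i => l i ∈ t)).image l = t := by
              ext y
              simp only [Finset.mem_image, Finset.mem_filter]
              constructor
              · rintro ⟨i, ⟨_, hit⟩, rfl⟩; exact hit
              · intro hy
                obtain ⟨i, hi, rfl⟩ := Finset.mem_image.1 (ht.subset hy)
                exact ⟨i, ⟨hi, hy⟩, rfl⟩
            rw [hft]
            exact hx
      rw [hU]
      exact hStab _ hv.2 (hmem0.2 h0v)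
    · -- clause (v)
      intro m'' hm''
      subst hm''
      have hn0pos : 0 < n0 := by
        have h1 : l 0 < l (m'' + 1) := hmono (by omega)
        omega
      obtain ⟨n'', rfl⟩ : ∃ n'', n0 = n'' + 1 := ⟨n0 - 1, by omega⟩
      obtain ⟨hsub, hgA, hgA1⟩ := hV n'' rfl
      have hgA' := hgA
      have hgA1' := hgA1
      simp only [GS] at hgA' hgA1'
      have hrange : ∀ i, 1 ≤ i → i ≤ m'' → 1 ≤ l i ∧ l i ≤ n'' := by
        intro i h1 h2
        have ha : l 0 < l i := hmono (by omega)
        have hb : l i < l (m'' + 1) := hmono (by omega)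
        omega
      have hfun : (fun s : Finset ℕ => A (Finset.image l (insert (m'' + 1) s))) =
          fun v : Finset ℕ => A (insert (n'' + 1) (v.image l)) := by
        funext v
        rw [Finset.image_insert, heq]
      have hindex : {v : Finset ℕ | v ⊆ Finset.range (m'' + 1) ∧
          Finset.image l v ∈ {s : Finset ℕ | s ⊆ Finset.Icc 1 n''}} =
          {s : Finset ℕ | s ⊆ Finset.Icc 1 m''} := by
        ext v
        simp only [Set.mem_setOf_eq]
        constructor
        · rintro ⟨h1, h2⟩ i hi
          have hir : i < m'' + 1 := Finset.mem_range.1 (h1 hi)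
          have hm := Finset.mem_Icc.1 (h2 (Finset.mem_image_of_mem l hi))
          have hipos : 1 ≤ i := by
            rcases Nat.eq_zero_or_pos i with rfl | hp
            · rw [h0] at hm; omega
            · exact hp
          exact Finset.mem_Icc.2 ⟨hipos, by omega⟩
        · intro hv
          have hvr : v ⊆ Finset.range (m'' + 1) := by
            intro i hi
            have := (Finset.mem_Icc.1 (hv hi)).2
            exact Finset.mem_range.2 (by omega)
          refine ⟨hvr, fun j hj => ?_⟩
          obtain ⟨i, hi, rfl⟩ := Finset.mem_image.1 hj
          have hm := Finset.mem_Icc.1 (hv hi)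
          exact Finset.mem_Icc.2 (hrange i hm.1 hm.2)
      have hlast' : l (m'' + 1 - 1) < n'' + 1 := by
        simp only [Nat.add_sub_cancel]
        have := hmono (show m'' < m'' + 1 by omega)
        omega
      refine ⟨?_, ?_, ?_⟩
      · show SysElemSub L hf {s | s ⊆ Finset.Icc 1 m''} (fun v => A (v.image l))
          (fun s => A (Finset.image l (insert (m'' + 1) s)))
        rw [hfun]
        exact sysElemSub_transfer L hf l hmono A (n'' + 1) n'' m'' hrange hsub
          hgA'.2.1.1 hgA1'.2.1.1
      · have h := IH (n'' + 1) (by omega) {s | s ⊆ Finset.Icc 1 n''} A l (m'' + 1)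
          hgA hmono h0 (by omega) hlast'
        exact hindex ▸ h
      · have h := IH (n'' + 1) (by omega) {s | s ⊆ Finset.Icc 1 n''}
          (fun s => A (insert (n'' + 1) s)) l (m'' + 1) hgA1 hmono h0 (by omega) hlast'
        show GS L Pr hf (m'' + 1) {s : Finset ℕ | s ⊆ Finset.Icc 1 m''}
          (fun s => A (Finset.image l (insert (m'' + 1) s)))
        rw [hfun]
        exact hindex ▸ h
    · -- WitnessClause
      intro k φ σ b hσ hb hr
      obtain ⟨b', h1, h2, h3⟩ := hWit k φ (fun i => (σ i).image l) b
        (fun i => (hσ i).2) hb hr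
      refine ⟨b', fun i => ?_, fun i hi => ?_, h3⟩
      · have := h1 i
        rwa [← heq, ← Finset.image_erase inj] at this
      · refine h2 i (fun hmem => hi ?_)
        obtain ⟨j, hj, hlj⟩ := Finset.mem_image.1 hmem
        rwa [inj (hlj.trans heq.symm)] at hj
    · -- lower subsystem
      rcases Nat.eq_zero_or_pos m0 with rfl | hpos
      · obtain rfl : n0 = 0 := by rw [← heq, h0]
        refine gs0_congr L Pr hf ?_ (by simp) hg6
        intro s
        simp only [Set.mem_setOf_eq, Set.mem_sep_iff]
        constructor
        · rintro ⟨⟨h1, h2⟩, h3⟩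
          have hse : s = ∅ := by
            rw [Finset.eq_empty_iff_forall_notMem]
            intro i hi
            have := Finset.mem_range.1 (h1 hi)
            have : i = 0 := by omega
            exact h3 (this ▸ hi)
          subst hse
          exact ⟨by simpa using h2, by simp⟩
        · rintro ⟨h1, h2⟩
          have hse : s = ∅ := by
            rw [Finset.eq_empty_iff_forall_notMem]
            intro i hi
            have := Finset.mem_range.1 (hNice.1.1 s h1 hi)
            have : i = 0 := by omega
            exact h2 (this ▸ hi)
          subst hse
          exact ⟨⟨by simp, by simpa using h1⟩, by simp⟩
      · have h := IH n0 (by omega) {s ∈ I | n0 ∉ s} A l m0 hg6 hmono h0 hpos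
          (by have := hmono (show m0 - 1 < m0 by omega); omega)
        have hindex : {v : Finset ℕ | v ⊆ Finset.range m0 ∧
            Finset.image l v ∈ {s ∈ I | n0 ∉ s}} =
            {s ∈ {v : Finset ℕ | v ⊆ Finset.range (m0 + 1) ∧ Finset.image l v ∈ I} |
              m0 ∉ s} := by
          ext v
          simp only [Set.mem_setOf_eq, Set.mem_sep_iff]
          constructor
          · rintro ⟨h1, h2, h3⟩
            refine ⟨⟨h1.trans (Finset.range_subset_range.2 (by omega)), h2⟩, fun hm => ?_⟩
            exact absurd (Finset.mem_range.1 (h1 hm)) (lt_irrefl m0)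
          · rintro ⟨⟨h1, h2⟩, h3⟩
            refine ⟨fun i hi => Finset.mem_range.2 ?_, h2, fun hmem => ?_⟩
            · have := Finset.mem_range.1 (h1 hi)
              have : i ≠ m0 := fun e => h3 (e ▸ hi)
              omega
            · obtain ⟨j, hj, hlj⟩ := Finset.mem_image.1 hmem
              have : j = m0 := inj (hlj.trans heq.symm)
              exact h3 (this ▸ hj)
        exact hindex ▸ h
    · -- shifted lower subsystem
      rcases Nat.eq_zero_or_pos m0 with rfl | hpos
      · obtain rfl : n0 = 0 := by rw [← heq, h0]
        refine gs0_congr L Pr hf ?_ (by simp [h0]) hg7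
        intro s
        simp only [Set.mem_setOf_eq]
        have hins : Finset.image l (insert 0 (∅ : Finset ℕ)) = insert 0 (∅ : Finset ℕ) := by
          simp [h0]
        constructor
        · rintro ⟨h1, h2, h3⟩
          have hse : s = ∅ := by
            rw [Finset.eq_empty_iff_forall_notMem]
            intro i hi
            have := Finset.mem_range.1 (h2 (Finset.mem_insert_of_mem hi))
            have : i = 0 := by omega
            exact h1 (this ▸ hi)
          subst hse
          rw [hins] at h3
          exact ⟨by simp, h3⟩
        · rintro ⟨h1, h2⟩
          have hse : s = ∅ := by
            rw [Finset.eq_empty_iff_forall_notMem]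
            intro i hi
            have := Finset.mem_range.1
              (hNice.1.1 _ h2 (Finset.mem_insert_of_mem hi))
            have : i = 0 := by omega
            exact h1 (this ▸ hi)
          subst hse
          refine ⟨by simp, ?_, ?_⟩
          · intro i hi
            simp only [Finset.mem_insert, Finset.notMem_empty, or_false] at hi
            exact Finset.mem_range.2 (by omega)
          · rw [hins]
            exact h2
      · have h := IH n0 (by omega) {s | n0 ∉ s ∧ insert n0 s ∈ I}
          (fun s => A (insert n0 s)) l m0 hg7 hmono h0 hpos
          (by have := hmono (show m0 - 1 < m0 by omega); omega)
        have hfun : (fun s : Finset ℕ => A (Finset.image l (insert m0 s))) =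
            fun v : Finset ℕ => A (insert n0 (v.image l)) := by
          funext v
          rw [Finset.image_insert, heq]
        have hindex : {v : Finset ℕ | v ⊆ Finset.range m0 ∧
            Finset.image l v ∈ {s | n0 ∉ s ∧ insert n0 s ∈ I}} =
            {v : Finset ℕ | m0 ∉ v ∧ insert m0 v ∈
              {v : Finset ℕ | v ⊆ Finset.range (m0 + 1) ∧ Finset.image l v ∈ I}} := by
          ext v
          simp only [Set.mem_setOf_eq]
          constructor
          · rintro ⟨h1, h2, h3⟩
            refine ⟨fun hm => absurd (Finset.mem_range.1 (h1 hm)) (lt_irrefl m0),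
              ?_, ?_⟩
            · intro i hi
              rcases Finset.mem_insert.1 hi with rfl | hi'
              · exact Finset.mem_range.2 (by omega)
              · have := Finset.mem_range.1 (h1 hi')
                exact Finset.mem_range.2 (by omega)
            · rw [Finset.image_insert, heq]
              exact h3
          · rintro ⟨h1, h2, h3⟩
            refine ⟨?_, ?_, ?_⟩
            · intro i hi
              have ha := Finset.mem_range.1 (h2 (Finset.mem_insert_of_mem hi))
              have hb : i ≠ m0 := fun e => h1 (e ▸ hi)
              exact Finset.mem_range.2 (by omega)
            · intro hmem
              obtain ⟨j, hj, hlj⟩ := Finset.mem_image.1 hmem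
              have : j = m0 := inj (hlj.trans heq.symm)
              exact h1 (this ▸ hj)
            · rw [← heq, ← Finset.image_insert]
              exact h3
        show GS L Pr hf m0 {v : Finset ℕ | m0 ∉ v ∧ insert m0 v ∈
            {v : Finset ℕ | v ⊆ Finset.range (m0 + 1) ∧ Finset.image l v ∈ I}}
          (fun s => A (Finset.image l (insert m0 s)))
        rw [hfun]
        exact hindex ▸ h

end Restrict

/-- the restriction of a good system along `0 = l₀ < l₁ < … < l_{m−1} < n`
is again a good system. -/
theorem statement_14 (Pr : L.Relations 1) (hf : ∀ n, IsEmpty (L.Functions n))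
    (hVSE : VeryStablyEmbedded (C := C) L hf Pr)
    (n m : ℕ) (I : Set (Finset ℕ)) (A : Finset ℕ → Set C)
    (hGS : GS L Pr hf n I A)
    (l : ℕ → ℕ) (hmono : StrictMono l) (hm : 0 < m) (h0 : l 0 = 0)
    (hlast : l (m - 1) < n) :
    GS L Pr hf m {v | v ⊆ Finset.range m ∧ Finset.image l v ∈ I}
      (fun v => A (Finset.image l v)) :=
  restrict_main L Pr hf n I A l m hGS hmono h0 hm hlast


end Gaifman
end

section
/- If B is locally constructible over A, and A ⊆_t C with A ⊆ C, then B is locally constructible over C by the same construction sequence, A ∪ B ⊆_t C ∪ B, and tp(B/A) ⊢ tp(B/C). -/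
open FirstOrder FirstOrder.Language FirstOrder.Language.Structure Cardinal

universe u

namespace Gaifman

variable (L : FirstOrder.Language.{u, u}) {C : Type u} [L.Structure C]

section Statement17Aux

variable {L}
variable {A D : Set C} {ι : Type u} {r : ι → ι → Prop} {d : ι → C}

private lemma realize_funext {α : Type*} {φ : L.Formula α} {v w : α → C}
    (h : ∀ x, v x = w x) : φ.Realize v ↔ φ.Realize w :=
  iff_of_eq (congrArg φ.Realize (funext h))

private lemma exists_rmax (hwo : IsWellOrder ι r) :
    ∀ s : Finset ι, s.Nonempty → ∃ j ∈ s, ∀ k ∈ s, r k j ∨ k = j := by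
  haveI := hwo
  classical
  intro s
  induction s using Finset.induction_on with
  | empty => rintro ⟨x, hx⟩; simp at hx
  | @insert a s ha ih =>
    intro _
    rcases s.eq_empty_or_nonempty with rfl | hs
    · refine ⟨a, Finset.mem_insert_self _ _, ?_⟩
      intro k hk
      right
      simpa using hk
    · obtain ⟨j, hj, hmax⟩ := ih hs
      rcases trichotomous (r := r) a j with h | h | h
      · refine ⟨j, Finset.mem_insert_of_mem hj, ?_⟩
        intro k hk
        rcases Finset.mem_insert.mp hk with rfl | hk
        · exact Or.inl h
        · exact hmax k hk
      · subst h
        refine ⟨a, Finset.mem_insert_self _ _, ?_⟩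
        intro k hk
        rcases Finset.mem_insert.mp hk with rfl | hk
        · exact Or.inr rfl
        · exact hmax k hk
      · refine ⟨a, Finset.mem_insert_self _ _, ?_⟩
        intro k hk
        rcases Finset.mem_insert.mp hk with rfl | hk
        · exact Or.inr rfl
        · rcases hmax k hk with h' | rfl
          · exact Or.inl (_root_.trans h' h)
          · exact Or.inl h

/-- The statement that finite `D`-tuples satisfying a formula with parameters in
`A ∪ S` can be moved into `A`. -/
private abbrev MoveStmt (A D S : Set C) : Prop :=
  ∀ (n : ℕ) (α : Type) [Fintype α] (ψ : L.Formula (Fin n ⊕ α)) (w : α → C),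
    (∀ p, w p ∈ A ∪ S) → ∀ e : Fin n → C, (∀ p, e p ∈ D) →
      ψ.Realize (Sum.elim e w) →
      ∃ e' : Fin n → C, (∀ p, e' p ∈ A) ∧ ψ.Realize (Sum.elim e' w)

private lemma baseMove (ht : SubT L A D) (n : ℕ) (α : Type) [Fintype α]
    (ψ : L.Formula (Fin n ⊕ α)) (w : α → C) (hw : ∀ p, w p ∈ A)
    (e : Fin n → C) (he : ∀ p, e p ∈ D) (hre : ψ.Realize (Sum.elim e w)) :
    ∃ e' : Fin n → C, (∀ p, e' p ∈ A) ∧ ψ.Realize (Sum.elim e' w) := by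
  classical
  let E := Fintype.equivFin α
  let ψ' : L.Formula (Fin n ⊕ Fin (Fintype.card α)) := ψ.relabel (Sum.map id E)
  have key : ∀ e₀ : Fin n → C,
      ψ'.Realize (Sum.elim e₀ (w ∘ E.symm)) ↔ ψ.Realize (Sum.elim e₀ w) := by
    intro e₀
    show (ψ.relabel (Sum.map id E)).Realize _ ↔ _
    rw [Formula.realize_relabel]
    refine realize_funext ?_
    rintro (q | p)
    · rfl
    · show w (E.symm (E p)) = w p
      rw [Equiv.symm_apply_apply]; try rfl
  obtain ⟨e', he', hre'⟩ := ht n (Fintype.card α) ψ' (w ∘ E.symm) e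
    (fun q => hw _) he ((key e).mpr hre)
  exact ⟨e', he', (key e').mp hre'⟩

private lemma moveCore (ht : SubT L A D)
    (hli : ∀ i : ι, LocallyIsolatedTp L (A ∪ d '' {j | r j i}) ![d i])
    (js : ι) (IH : MoveStmt (L := L) A D (d '' {j | r j js}))
    (n : ℕ) (α : Type) [Fintype α] (ψ : L.Formula (Fin n ⊕ α)) (w : α → C)
    (hw : ∀ p, w p ∈ A ∨ ∃ j, (r j js ∨ j = js) ∧ w p = d j)
    (e : Fin n → C) (he : ∀ p, e p ∈ D) (hre : ψ.Realize (Sum.elim e w)) :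
    ∃ e' : Fin n → C, (∀ p, e' p ∈ A) ∧ ψ.Realize (Sum.elim e' w) := by
  classical
  let M : α → Prop := fun p => w p ∉ A ∧ w p = d js
  let α' := {p : α // ¬ M p}
  have hw' : ∀ p : α', w p.1 ∈ A ∪ d '' {j | r j js} := by
    rintro ⟨p, hp⟩
    by_cases hA : w p ∈ A
    · exact Or.inl hA
    · rcases hw p with h | ⟨j, hj | rfl, hwp⟩
      · exact absurd h hA
      · exact Or.inr ⟨j, hj, hwp.symm⟩
      · exact absurd ⟨hA, hwp⟩ hp
  let ρ : Fin n ⊕ α → Fin 1 ⊕ (Fin n ⊕ α') :=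
    Sum.elim (fun q => Sum.inr (Sum.inl q))
      (fun p => if h : M p then Sum.inl 0 else Sum.inr (Sum.inr ⟨p, h⟩))
  let φ : L.Formula (Fin 1 ⊕ (Fin n ⊕ α')) := ψ.relabel ρ
  have hφ : ∀ (v : Fin 1 → C) (e₀ : Fin n → C) (w₀ : α' → C),
      φ.Realize (Sum.elim v (Sum.elim e₀ w₀)) ↔
        ψ.Realize (Sum.elim e₀ (fun p => if h : M p then v 0 else w₀ ⟨p, h⟩)) := by
    intro v e₀ w₀
    show (ψ.relabel ρ).Realize _ ↔ _
    rw [Formula.realize_relabel]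
    refine realize_funext ?_
    rintro (q | p)
    · rfl
    · show Sum.elim v (Sum.elim e₀ w₀)
          (if h : M p then Sum.inl 0 else Sum.inr (Sum.inr ⟨p, h⟩)) =
        if h : M p then v 0 else w₀ ⟨p, h⟩
      by_cases h : M p
      · rw [dif_pos h, dif_pos h]; try rfl
      · rw [dif_neg h, dif_neg h]; try rfl
  have hwM : ∀ p, M p → w p = d js := fun p h => h.2
  let w' : α' → C := fun p => w p.1
  let E : (Fin n ⊕ α') ≃ Fin (n + Fintype.card α') :=
    (Equiv.sumCongr (Equiv.refl (Fin n)) (Fintype.equivFin α')).trans finSumFinEquiv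
  let φh : L.Formula (Fin 1 ⊕ Fin (n + Fintype.card α')) := φ.relabel (Sum.map id E)
  have hφh : ∀ (v : Fin 1 → C) (uu : Fin (n + Fintype.card α') → C),
      φh.Realize (Sum.elim v uu) ↔ φ.Realize (Sum.elim v (uu ∘ E)) := by
    intro v uu
    show (φ.relabel (Sum.map id E)).Realize _ ↔ _
    rw [Formula.realize_relabel]
    refine realize_funext ?_
    rintro (x | y) <;> rfl
  obtain ⟨m₂', θ₂, a₂, ha₂, hθreal, hiso⟩ := hli js (n + Fintype.card α') φh.not
  let ξ : L.Formula (Fin 1 ⊕ (Fin n ⊕ (α' ⊕ Fin m₂'))) :=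
    (θ₂.relabel (Sum.map id fun q => Sum.inr (Sum.inr q))) ⊓
      (φ.relabel (Sum.map id (Sum.map id Sum.inl)))
  have hξ : ∀ (v : Fin 1 → C) (e₀ : Fin n → C) (w₀ : α' → C) (a₀ : Fin m₂' → C),
      ξ.Realize (Sum.elim v (Sum.elim e₀ (Sum.elim w₀ a₀))) ↔
        (θ₂.Realize (Sum.elim v a₀) ∧ φ.Realize (Sum.elim v (Sum.elim e₀ w₀))) := by
    intro v e₀ w₀ a₀
    show ((θ₂.relabel _) ⊓ (φ.relabel _)).Realize _ ↔ _
    rw [Formula.realize_inf, Formula.realize_relabel, Formula.realize_relabel]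
    refine and_congr (realize_funext ?_) (realize_funext ?_)
    · rintro (x | q) <;> rfl
    · rintro (x | (q | p)) <;> rfl
  let χ : L.Formula (Fin n ⊕ (α' ⊕ Fin m₂')) := (ξ.relabel (Sum.elim Sum.inr Sum.inl)).iExs (Fin 1)
  have hχ : ∀ V : Fin n ⊕ (α' ⊕ Fin m₂') → C,
      χ.Realize V ↔ ∃ v : Fin 1 → C, ξ.Realize (Sum.elim v V) := by
    intro V
    show ((ξ.relabel _).iExs _).Realize _ ↔ _
    rw [Formula.realize_iExs]
    refine exists_congr fun v => Formula.realize_relabel.trans (realize_funext ?_)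
    rintro (x | y) <;> rfl
  have hmain : χ.Realize (Sum.elim e (Sum.elim w' a₂)) := by
    rw [hχ]
    refine ⟨![d js], ?_⟩
    rw [hξ]
    refine ⟨hθreal, ?_⟩
    rw [hφ]
    refine (realize_funext ?_).mpr hre
    rintro (q | p)
    · rfl
    · show (if h : M p then (![d js] : Fin 1 → C) 0 else w' ⟨p, h⟩) = w p
      by_cases h : M p
      · rw [dif_pos h]; try rfl
        exact (hwM p h).symm
      · rw [dif_neg h]; try rfl
  obtain ⟨e', he', hre'⟩ := IH n (α' ⊕ Fin m₂') χ (Sum.elim w' a₂)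
    (by rintro (p | q)
        · exact hw' p
        · exact ha₂ q)
    e he hmain
  rw [hχ] at hre'
  obtain ⟨v₀, hv₀⟩ := hre'
  rw [hξ] at hv₀
  obtain ⟨hθv₀, hφv₀⟩ := hv₀
  let b : Fin (n + Fintype.card α') → C := Sum.elim e' w' ∘ E.symm
  have hbX : ∀ q, b q ∈ A ∪ d '' {j | r j js} := by
    intro q
    show Sum.elim e' w' (E.symm q) ∈ _
    rcases E.symm q with q' | p'
    · exact Or.inl (he' q')
    · exact hw' p'
  have hbE : ∀ x, (b ∘ E) x = Sum.elim e' w' x := by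
    intro x
    show Sum.elim e' w' (E.symm (E x)) = _
    rw [Equiv.symm_apply_apply]; try rfl
  have hb1 : φh.Realize (Sum.elim v₀ b) := by
    rw [hφh]
    refine (realize_funext ?_).mpr hφv₀
    rintro (x | y)
    · rfl
    · exact hbE y
  have hb2 : φh.Realize (Sum.elim ![d js] b) := by
    by_contra hcon
    have h1 : φh.not.Realize (Sum.elim ![d js] b) := by
      rw [Formula.realize_not]; exact hcon
    have h2 := hiso v₀ hθv₀ b hbX h1
    rw [Formula.realize_not] at h2
    exact h2 hb1
  refine ⟨e', he', ?_⟩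
  rw [hφh] at hb2
  have hb3 : φ.Realize (Sum.elim ![d js] (Sum.elim e' w')) := by
    refine (realize_funext ?_).mp hb2
    rintro (x | y)
    · rfl
    · exact hbE y
  rw [hφ] at hb3
  refine (realize_funext ?_).mp hb3
  rintro (q | p)
  · rfl
  · show (if h : M p then (![d js] : Fin 1 → C) 0 else w' ⟨p, h⟩) = w p
    by_cases h : M p
    · rw [dif_pos h]; try rfl
      exact (hwM p h).symm
    · rw [dif_neg h]; try rfl

private lemma moveP (hwo : IsWellOrder ι r) (ht : SubT L A D)
    (hli : ∀ i : ι, LocallyIsolatedTp L (A ∪ d '' {j | r j i}) ![d i]) :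
    ∀ i : ι, MoveStmt (L := L) A D (d '' {j | r j i}) := by
  intro i0
  refine hwo.toIsWellFounded.wf.induction
    (C := fun i => MoveStmt (L := L) A D (d '' {j | r j i})) i0 ?_
  intro i IH n α iα ψ w hw e he hre
  classical
  have hch : ∀ p, ∃ jo : Option ι, (jo = none → w p ∈ A) ∧
      ∀ j, jo = some j → r j i ∧ w p = d j := by
    intro p
    rcases hw p with h | ⟨j, hj, hdj⟩
    · exact ⟨none, fun _ => h, by simp⟩
    · exact ⟨some j, by simp, fun j' hj' => by
        obtain rfl := Option.some.inj hj'
        exact ⟨hj, hdj.symm⟩⟩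
  choose σ hσn hσs using hch
  by_cases hA : ∀ p, w p ∈ A
  · exact baseMove ht n α ψ w hA e he hre
  · let s : Finset ι := Finset.univ.biUnion fun p => (σ p).toFinset
    have hmem : ∀ j, j ∈ s ↔ ∃ p, σ p = some j := by
      intro j
      simp [s, Finset.mem_biUnion, Option.mem_toFinset, Option.mem_def]
    have hs : s.Nonempty := by
      push_neg at hA
      obtain ⟨p, hp⟩ := hA
      rcases hσ : σ p with _ | j
      · exact absurd (hσn p hσ) hp
      · exact ⟨j, (hmem j).mpr ⟨p, hσ⟩⟩
    obtain ⟨js, hjs, hmax⟩ := exists_rmax hwo s hs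
    obtain ⟨p0, hp0⟩ := (hmem js).mp hjs
    have hrji : r js i := (hσs p0 js hp0).1
    refine moveCore ht hli js (IH js hrji) n α ψ w ?_ e he hre
    intro p
    rcases hσ : σ p with _ | j
    · exact Or.inl (hσn p hσ)
    · exact Or.inr ⟨j, hmax j ((hmem j).mpr ⟨p, hσ⟩), (hσs p j hσ).2⟩

private lemma moveS (hwo : IsWellOrder ι r) (ht : SubT L A D)
    (hli : ∀ i : ι, LocallyIsolatedTp L (A ∪ d '' {j | r j i}) ![d i]) :
    MoveStmt (L := L) A D (Set.range d) := by
  intro n α iα ψ w hw e he hre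
  classical
  have hch : ∀ p, ∃ jo : Option ι, (jo = none → w p ∈ A) ∧
      ∀ j, jo = some j → w p = d j := by
    intro p
    rcases hw p with h | ⟨j, hdj⟩
    · exact ⟨none, fun _ => h, by simp⟩
    · exact ⟨some j, by simp, fun j' hj' => by
        obtain rfl := Option.some.inj hj'
        exact hdj.symm⟩
  choose σ hσn hσs using hch
  by_cases hA : ∀ p, w p ∈ A
  · exact baseMove ht n α ψ w hA e he hre
  · let s : Finset ι := Finset.univ.biUnion fun p => (σ p).toFinset
    have hmem : ∀ j, j ∈ s ↔ ∃ p, σ p = some j := by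
      intro j
      simp [s, Finset.mem_biUnion, Option.mem_toFinset, Option.mem_def]
    have hs : s.Nonempty := by
      push_neg at hA
      obtain ⟨p, hp⟩ := hA
      rcases hσ : σ p with _ | j
      · exact absurd (hσn p hσ) hp
      · exact ⟨j, (hmem j).mpr ⟨p, hσ⟩⟩
    obtain ⟨js, hjs, hmax⟩ := exists_rmax hwo s hs
    refine moveCore ht hli js (moveP hwo ht hli js) n α ψ w ?_ e he hre
    intro p
    rcases hσ : σ p with _ | j
    · exact Or.inl (hσn p hσ)
    · exact Or.inr ⟨j, hmax j ((hmem j).mpr ⟨p, hσ⟩), hσs p j hσ⟩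

private lemma subT_of_move {S : Set C} (move : MoveStmt (L := L) A D S) :
    SubT L (A ∪ S) (D ∪ (A ∪ S)) := by
  intro n m ψ a b ha hb hre
  classical
  let K : Fin n → Prop := fun q => b q ∈ A ∪ S
  let δ := {q : Fin n // ¬ K q}
  let Eδ : δ ≃ Fin (Fintype.card δ) := Fintype.equivFin δ
  let g : Fin n ⊕ Fin m → Fin (Fintype.card δ) ⊕ ({q : Fin n // K q} ⊕ Fin m) :=
    Sum.elim (fun q => if h : K q then Sum.inr (Sum.inl ⟨q, h⟩) else Sum.inl (Eδ ⟨q, h⟩))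
      (fun q => Sum.inr (Sum.inr q))
  let ψ' := ψ.relabel g
  have key : ∀ e₀ : Fin (Fintype.card δ) → C,
      ψ'.Realize (Sum.elim e₀ (Sum.elim (fun q : {q : Fin n // K q} => b q.1) a)) ↔
        ψ.Realize (Sum.elim (fun q => if h : K q then b q else e₀ (Eδ ⟨q, h⟩)) a) := by
    intro e₀
    show (ψ.relabel g).Realize _ ↔ _
    rw [Formula.realize_relabel]
    refine realize_funext ?_
    rintro (q | q)
    · show Sum.elim e₀ (Sum.elim (fun q : {q : Fin n // K q} => b q.1) a)
          (if h : K q then Sum.inr (Sum.inl ⟨q, h⟩) else Sum.inl (Eδ ⟨q, h⟩)) =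
        if h : K q then b q else e₀ (Eδ ⟨q, h⟩)
      by_cases h : K q
      · rw [dif_pos h, dif_pos h]; try rfl
      · rw [dif_neg h, dif_neg h]; try rfl
    · rfl
  have hbD : ∀ q : δ, b q.1 ∈ D := by
    rintro ⟨q, hq⟩
    rcases hb q with h | h
    · exact h
    · exact absurd h hq
  have hre0 : ψ'.Realize (Sum.elim (fun t => b (Eδ.symm t).1)
      (Sum.elim (fun q : {q : Fin n // K q} => b q.1) a)) := by
    rw [key]
    refine (realize_funext ?_).mpr hre
    rintro (q | q)
    · show (if h : K q then b q else b (Eδ.symm (Eδ ⟨q, h⟩)).1) = b q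
      by_cases h : K q
      · rw [dif_pos h]; try rfl
      · rw [dif_neg h, Equiv.symm_apply_apply]; try rfl
    · rfl
  obtain ⟨e', he', hre'⟩ := move (Fintype.card δ) ({q : Fin n // K q} ⊕ Fin m) ψ'
    (Sum.elim (fun q => b q.1) a)
    (by rintro (q | q)
        · exact q.2
        · exact ha q)
    (fun t => b (Eδ.symm t).1) (fun t => hbD _) hre0
  refine ⟨fun q => if h : K q then b q else e' (Eδ ⟨q, h⟩), ?_, (key e').mp hre'⟩
  intro q
  show (if h : K q then b q else e' (Eδ ⟨q, h⟩)) ∈ A ∪ S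
  by_cases h : K q
  · rw [dif_pos h]; try rfl
    exact h
  · rw [dif_neg h]; try rfl
    exact Or.inl (he' _)

private lemma dec_combine {X : Set C} {k : ℕ} {c : Fin k → C}
    (h : LocallyIsolatedTp L X c) (m : ℕ) (φ : L.Formula (Fin k ⊕ Fin m)) :
    ∃ (m' : ℕ) (θ : L.Formula (Fin k ⊕ Fin m')) (a : Fin m' → C),
      (∀ p, a p ∈ X) ∧ θ.Realize (Sum.elim c a) ∧
      ∀ v w : Fin k → C, θ.Realize (Sum.elim v a) → θ.Realize (Sum.elim w a) →
        ∀ b : Fin m → C, (∀ p, b p ∈ X) →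
          (φ.Realize (Sum.elim v b) → φ.Realize (Sum.elim w b)) := by
  obtain ⟨m₁, θ₁, a₁, ha₁, hr₁, hi₁⟩ := h m φ
  obtain ⟨m₂, θ₂, a₂, ha₂, hr₂, hi₂⟩ := h m φ.not
  have key₁ : ∀ v : Fin k → C,
      (θ₁.relabel (Sum.map id (Fin.castAdd m₂))).Realize (Sum.elim v (Fin.append a₁ a₂)) ↔
        θ₁.Realize (Sum.elim v a₁) := by
    intro v
    rw [Formula.realize_relabel]
    refine realize_funext ?_
    rintro (x | q)
    · rfl
    · show Fin.append a₁ a₂ (Fin.castAdd m₂ q) = a₁ q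
      rw [Fin.append_left]; try rfl
  have key₂ : ∀ v : Fin k → C,
      (θ₂.relabel (Sum.map id (Fin.natAdd m₁))).Realize (Sum.elim v (Fin.append a₁ a₂)) ↔
        θ₂.Realize (Sum.elim v a₂) := by
    intro v
    rw [Formula.realize_relabel]
    refine realize_funext ?_
    rintro (x | q)
    · rfl
    · show Fin.append a₁ a₂ (Fin.natAdd m₁ q) = a₂ q
      rw [Fin.append_right]; try rfl
  refine ⟨m₁ + m₂,
    (θ₁.relabel (Sum.map id (Fin.castAdd m₂))) ⊓ (θ₂.relabel (Sum.map id (Fin.natAdd m₁))),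
    Fin.append a₁ a₂, ?_, ?_, ?_⟩
  · intro p
    refine Fin.addCases (fun q => ?_) (fun q => ?_) p
    · rw [Fin.append_left]; exact ha₁ q
    · rw [Fin.append_right]; exact ha₂ q
  · rw [Formula.realize_inf, key₁, key₂]
    exact ⟨hr₁, hr₂⟩
  · intro v w hv hw b hb hφv
    rw [Formula.realize_inf, key₁, key₂] at hv hw
    have h1 : φ.Realize (Sum.elim c b) := by
      by_contra hc
      have := hi₂ v hv.2 b hb (by rw [Formula.realize_not]; exact hc)
      rw [Formula.realize_not] at this
      exact this hφv
    exact hi₁ w hw.1 b hb h1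

private lemma dec_lift {S : Set C} (hsub : SubT L (A ∪ S) (D ∪ (A ∪ S)))
    {k m m' : ℕ} (θ : L.Formula (Fin k ⊕ Fin m')) (a : Fin m' → C)
    (ha : ∀ p, a p ∈ A ∪ S) (φ : L.Formula (Fin k ⊕ Fin m))
    (dec : ∀ v w, θ.Realize (Sum.elim v a) → θ.Realize (Sum.elim w a) →
      ∀ b : Fin m → C, (∀ p, b p ∈ A ∪ S) →
        (φ.Realize (Sum.elim v b) → φ.Realize (Sum.elim w b))) :
    ∀ v w, θ.Realize (Sum.elim v a) → θ.Realize (Sum.elim w a) →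
      ∀ b : Fin m → C, (∀ p, b p ∈ D ∪ (A ∪ S)) →
        (φ.Realize (Sum.elim v b) → φ.Realize (Sum.elim w b)) := by
  intro v w hv hw b hb hφv
  by_contra hφw
  classical
  let η : L.Formula ((Fin k ⊕ Fin k) ⊕ (Fin m ⊕ Fin m')) :=
    ((θ.relabel (Sum.map Sum.inl Sum.inr)) ⊓ (θ.relabel (Sum.map Sum.inr Sum.inr))) ⊓
      ((φ.relabel (Sum.map Sum.inl Sum.inl)) ⊓ (φ.relabel (Sum.map Sum.inr Sum.inl)).not)
  let χ : L.Formula (Fin m ⊕ Fin m') := (η.relabel (Sum.elim Sum.inr Sum.inl)).iExs (Fin k ⊕ Fin k)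
  have hχ : ∀ (B₀ : Fin m → C) (a₀ : Fin m' → C),
      χ.Realize (Sum.elim B₀ a₀) ↔
        ∃ V : Fin k ⊕ Fin k → C,
          ((θ.Realize (Sum.elim (fun x => V (Sum.inl x)) a₀) ∧
            θ.Realize (Sum.elim (fun x => V (Sum.inr x)) a₀)) ∧
          (φ.Realize (Sum.elim (fun x => V (Sum.inl x)) B₀) ∧
            ¬ φ.Realize (Sum.elim (fun x => V (Sum.inr x)) B₀))) := by
    intro B₀ a₀
    show ((η.relabel _).iExs _).Realize _ ↔ _
    rw [Formula.realize_iExs]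
    refine exists_congr fun V => ?_
    rw [Formula.realize_relabel]
    show (((θ.relabel _) ⊓ (θ.relabel _)) ⊓ ((φ.relabel _) ⊓ (φ.relabel _).not)).Realize _ ↔ _
    rw [Formula.realize_inf, Formula.realize_inf, Formula.realize_inf,
      Formula.realize_not, Formula.realize_relabel, Formula.realize_relabel,
      Formula.realize_relabel, Formula.realize_relabel]
    refine and_congr (and_congr ?_ ?_) (and_congr ?_ (not_congr ?_))
    all_goals
      refine realize_funext ?_
      rintro (x | y) <;> rfl
  have hstart : χ.Realize (Sum.elim b a) := by
    rw [hχ]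
    exact ⟨Sum.elim v w, ⟨hv, hw⟩, hφv, hφw⟩
  obtain ⟨b', hb', hχ'⟩ := hsub m m' χ a b ha hb hstart
  obtain ⟨V, ⟨hV1, hV2⟩, hV3, hV4⟩ := (hχ b' a).mp hχ'
  exact hV4 (dec _ _ hV1 hV2 b' hb' hV3)

private lemma conj1aux (hAD : A ⊆ D) (hwo : IsWellOrder ι r) (ht : SubT L A D)
    (hli : ∀ i : ι, LocallyIsolatedTp L (A ∪ d '' {j | r j i}) ![d i]) :
    ∀ i : ι, LocallyIsolatedTp L (D ∪ d '' {j | r j i}) ![d i] := by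
  intro i m φ
  obtain ⟨m', θ, a, ha, hreal, dec⟩ := dec_combine (hli i) m φ
  have dec' := dec_lift (subT_of_move (moveP hwo ht hli i)) θ a ha φ dec
  refine ⟨m', θ, a, fun p => ?_, hreal, ?_⟩
  · rcases ha p with h | h
    · exact Or.inl (hAD h)
    · exact Or.inr h
  · intro c' hc' b hb hφ
    refine dec' ![d i] c' hreal hc' b (fun p => ?_) hφ
    rcases hb p with h | h
    · exact Or.inl h
    · exact Or.inr (Or.inr h)

/-- The claim that `g` preserves formulas on `d`-tuples with parameters from `D`. -/
private abbrev TransferClaim (D : Set C) (d : ι → C) (g : C → C)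
    (l : ℕ) (u : Fin l → ι) : Prop :=
  ∀ (m : ℕ) (φ : L.Formula (Fin l ⊕ Fin m)) (e : Fin m → C), (∀ p, e p ∈ D) →
    (φ.Realize (Sum.elim (fun p => d (u p)) e) ↔
      φ.Realize (Sum.elim (fun p => g (d (u p))) e))

private lemma gCore {B : Set C} (hAD : A ⊆ D) (hwo : IsWellOrder ι r) (ht : SubT L A D)
    (hB : B = A ∪ Set.range d)
    (hli : ∀ i : ι, LocallyIsolatedTp L (A ∪ d '' {j | r j i}) ![d i])
    (g : C → C)
    (hgB : ∀ (n m : ℕ) (φ : L.Formula (Fin n ⊕ Fin m)) (b : Fin n → C) (a : Fin m → C),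
      (∀ i, b i ∈ B) → (∀ i, a i ∈ A) →
      (φ.Realize (Sum.elim b a) ↔ φ.Realize (Sum.elim (g ∘ b) a)))
    (js : ι)
    (IHs : ∀ (l : ℕ) (u : Fin l → ι), (∀ p, r (u p) js) →
      TransferClaim (L := L) D d g l u)
    (l : ℕ) (u : Fin l → ι) (hu : ∀ p, r (u p) js ∨ u p = js) :
    TransferClaim (L := L) D d g l u := by
  classical
  intro m φ e he
  let β' := {p : Fin l // u p ≠ js}
  have hβ' : ∀ p : β', r (u p.1) js := fun p => (hu p.1).resolve_right p.2
  let ρ : Fin l ⊕ Fin m → Fin 1 ⊕ (β' ⊕ Fin m) :=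
    Sum.elim (fun p => if h : u p = js then Sum.inl 0 else Sum.inr (Sum.inl ⟨p, h⟩))
      (fun q => Sum.inr (Sum.inr q))
  let ζ : L.Formula (Fin 1 ⊕ (β' ⊕ Fin m)) := φ.relabel ρ
  have hζ : ∀ (v : Fin 1 → C) (x : β' → C) (e₀ : Fin m → C),
      ζ.Realize (Sum.elim v (Sum.elim x e₀)) ↔
        φ.Realize (Sum.elim (fun p => if h : u p = js then v 0 else x ⟨p, h⟩) e₀) := by
    intro v x e₀
    show (φ.relabel ρ).Realize _ ↔ _
    rw [Formula.realize_relabel]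
    refine realize_funext ?_
    rintro (p | q)
    · show Sum.elim v (Sum.elim x e₀)
          (if h : u p = js then Sum.inl 0 else Sum.inr (Sum.inl ⟨p, h⟩)) =
        if h : u p = js then v 0 else x ⟨p, h⟩
      by_cases h : u p = js
      · rw [dif_pos h, dif_pos h]; try rfl
      · rw [dif_neg h, dif_neg h]; try rfl
    · rfl
  let E : (β' ⊕ Fin m) ≃ Fin (Fintype.card β' + m) :=
    (Equiv.sumCongr (Fintype.equivFin β') (Equiv.refl (Fin m))).trans finSumFinEquiv
  let ζh : L.Formula (Fin 1 ⊕ Fin (Fintype.card β' + m)) := ζ.relabel (Sum.map id E)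
  have hζh : ∀ (v : Fin 1 → C) (uu : Fin (Fintype.card β' + m) → C),
      ζh.Realize (Sum.elim v uu) ↔ ζ.Realize (Sum.elim v (uu ∘ E)) := by
    intro v uu
    show (ζ.relabel (Sum.map id E)).Realize _ ↔ _
    rw [Formula.realize_relabel]
    refine realize_funext ?_
    rintro (x | y) <;> rfl
  obtain ⟨m', θ, a, haX, hθd, dec⟩ := dec_combine (hli js) (Fintype.card β' + m) ζh
  have dec' := dec_lift (subT_of_move (moveP hwo ht hli js)) θ a haX ζh dec
  have hch : ∀ q, ∃ jo : Option ι, (jo = none → a q ∈ A) ∧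
      ∀ j, jo = some j → r j js ∧ a q = d j := by
    intro q
    rcases haX q with h | ⟨j, hj, hdj⟩
    · exact ⟨none, fun _ => h, by simp⟩
    · exact ⟨some j, by simp, fun j' hj' => by
        obtain rfl := Option.some.inj hj'
        exact ⟨hj, hdj.symm⟩⟩
  choose τ hτn hτs using hch
  let κd := {q : Fin m' // τ q ≠ none}
  let κA := {q : Fin m' // τ q = none}
  let kIdx : κd → ι := fun q => (τ q.1).get (Option.ne_none_iff_isSome.mp q.2)
  have hkIdx : ∀ q : κd, r (kIdx q) js ∧ a q.1 = d (kIdx q) :=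
    fun q => hτs q.1 (kIdx q) (Option.some_get _).symm
  let F := (β' ⊕ κd) ⊕ (Fin m ⊕ κA)
  let gθ : Fin 1 ⊕ Fin m' → Fin 1 ⊕ F :=
    Sum.map id fun q =>
      if h : τ q = none then Sum.inr (Sum.inr ⟨q, h⟩) else Sum.inl (Sum.inr ⟨q, h⟩)
  let θ' : L.Formula (Fin 1 ⊕ F) := θ.relabel gθ
  have hθ' : ∀ (v : Fin 1 → C) (W : F → C),
      θ'.Realize (Sum.elim v W) ↔
        θ.Realize (Sum.elim v (fun q =>
          if h : τ q = none then W (Sum.inr (Sum.inr ⟨q, h⟩))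
          else W (Sum.inl (Sum.inr ⟨q, h⟩)))) := by
    intro v W
    show (θ.relabel gθ).Realize _ ↔ _
    rw [Formula.realize_relabel]
    refine realize_funext ?_
    rintro (x | q)
    · rfl
    · show W ((if h : τ q = none then Sum.inr (Sum.inr ⟨q, h⟩)
            else Sum.inl (Sum.inr ⟨q, h⟩) : F)) =
        if h : τ q = none then W (Sum.inr (Sum.inr ⟨q, h⟩)) else W (Sum.inl (Sum.inr ⟨q, h⟩))
      by_cases h : τ q = none
      · rw [dif_pos h, dif_pos h]; try rfl
      · rw [dif_neg h, dif_neg h]; try rfl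
  let gζ : Fin 1 ⊕ (β' ⊕ Fin m) → Fin 1 ⊕ F :=
    Sum.map id (Sum.elim (fun x => Sum.inl (Sum.inl x)) (fun q => Sum.inr (Sum.inl q)))
  let ζ' : L.Formula (Fin 1 ⊕ F) := ζ.relabel gζ
  have hζ' : ∀ (v : Fin 1 → C) (W : F → C),
      ζ'.Realize (Sum.elim v W) ↔
        ζ.Realize (Sum.elim v (Sum.elim (fun x => W (Sum.inl (Sum.inl x)))
          (fun q => W (Sum.inr (Sum.inl q))))) := by
    intro v W
    show (ζ.relabel gζ).Realize _ ↔ _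
    rw [Formula.realize_relabel]
    refine realize_funext ?_
    rintro (x | (y | q)) <;> rfl
  let χ : L.Formula F := ((θ' ⊓ ζ').relabel (Sum.elim Sum.inr Sum.inl)).iExs (Fin 1)
  have hχ : ∀ W : F → C, χ.Realize W ↔
      ∃ v : Fin 1 → C, θ'.Realize (Sum.elim v W) ∧ ζ'.Realize (Sum.elim v W) := by
    intro W
    show (((θ' ⊓ ζ').relabel _).iExs _).Realize _ ↔ _
    rw [Formula.realize_iExs]
    refine exists_congr fun v => ?_
    rw [Formula.realize_relabel, Formula.realize_inf]
    refine and_congr (realize_funext ?_) (realize_funext ?_)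
    · rintro (x | y) <;> rfl
    · rintro (x | y) <;> rfl
  let Ξ : L.Formula ((Fin 1 ⊕ Fin 1) ⊕ F) :=
    ((θ'.relabel (Sum.map Sum.inl id)) ⊓ (θ'.relabel (Sum.map Sum.inr id))).imp
      ((ζ'.relabel (Sum.map Sum.inl id)).iff (ζ'.relabel (Sum.map Sum.inr id)))
  let Δ : L.Formula F := (Ξ.relabel (Sum.elim Sum.inr Sum.inl)).iAlls (Fin 1 ⊕ Fin 1)
  have hΞ : ∀ (W : F → C) (i : Fin 1 ⊕ Fin 1 → C),
      Ξ.Realize (fun x => Sum.elim W i (Sum.elim Sum.inr Sum.inl x)) ↔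
        ((θ'.Realize (Sum.elim (fun t => i (Sum.inl t)) W) ∧
          θ'.Realize (Sum.elim (fun t => i (Sum.inr t)) W)) →
        (ζ'.Realize (Sum.elim (fun t => i (Sum.inl t)) W) ↔
          ζ'.Realize (Sum.elim (fun t => i (Sum.inr t)) W))) := by
    intro W i
    show (((θ'.relabel _) ⊓ (θ'.relabel _)).imp
      ((ζ'.relabel _).iff (ζ'.relabel _))).Realize _ ↔ _
    rw [Formula.realize_imp, Formula.realize_inf, Formula.realize_iff]
    refine imp_congr (and_congr ?_ ?_) (iff_congr ?_ ?_)
    all_goals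
      refine Formula.realize_relabel.trans (realize_funext ?_)
      rintro (x | y) <;> rfl
  have hΔ : ∀ W : F → C, Δ.Realize W ↔
      ∀ v w : Fin 1 → C, θ'.Realize (Sum.elim v W) → θ'.Realize (Sum.elim w W) →
        (ζ'.Realize (Sum.elim v W) ↔ ζ'.Realize (Sum.elim w W)) := by
    intro W
    show ((Ξ.relabel _).iAlls _).Realize _ ↔ _
    rw [Formula.realize_iAlls]
    constructor
    · intro H v w h1 h2
      exact (hΞ W (Sum.elim v w)).mp (Formula.realize_relabel.mp (H (Sum.elim v w))) ⟨h1, h2⟩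
    · intro H i
      exact Formula.realize_relabel.mpr ((hΞ W i).mpr fun h => H _ _ h.1 h.2)
  let W₁ : F → C := Sum.elim (Sum.elim (fun x : β' => d (u x.1)) (fun q => d (kIdx q)))
    (Sum.elim e (fun q : κA => a q.1))
  let W₂ : F → C := Sum.elim (Sum.elim (fun x : β' => g (d (u x.1))) (fun q => g (d (kIdx q))))
    (Sum.elim e (fun q : κA => a q.1))
  have hθW₁ : ∀ v : Fin 1 → C, θ'.Realize (Sum.elim v W₁) ↔ θ.Realize (Sum.elim v a) := by
    intro v
    rw [hθ' v W₁]
    refine realize_funext ?_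
    rintro (t | q)
    · rfl
    · show (if h : τ q = none then W₁ (Sum.inr (Sum.inr ⟨q, h⟩))
          else W₁ (Sum.inl (Sum.inr ⟨q, h⟩))) = a q
      by_cases h : τ q = none
      · rw [dif_pos h]; try rfl
      · rw [dif_neg h]; try rfl
        exact ((hkIdx ⟨q, h⟩).2).symm
  have hζW₁ : ∀ v : Fin 1 → C, ζ'.Realize (Sum.elim v W₁) ↔
      ζ.Realize (Sum.elim v (Sum.elim (fun x : β' => d (u x.1)) e)) := by
    intro v
    rw [hζ' v W₁]
    refine realize_funext ?_
    rintro (t | (y | q)) <;> rfl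
  have hζW₂ : ∀ v : Fin 1 → C, ζ'.Realize (Sum.elim v W₂) ↔
      ζ.Realize (Sum.elim v (Sum.elim (fun x : β' => g (d (u x.1))) e)) := by
    intro v
    rw [hζ' v W₂]
    refine realize_funext ?_
    rintro (t | (y | q)) <;> rfl
  let bb : Fin (Fintype.card β' + m) → C := Sum.elim (fun x : β' => d (u x.1)) e ∘ E.symm
  have hbb : ∀ q, bb q ∈ D ∪ (A ∪ d '' {j | r j js}) := by
    intro q
    show Sum.elim (fun x : β' => d (u x.1)) e (E.symm q) ∈ _
    rcases E.symm q with x | y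
    · exact Or.inr (Or.inr ⟨u x.1, hβ' x, rfl⟩)
    · exact Or.inl (he y)
  have hbbE : ∀ x, (bb ∘ E) x = Sum.elim (fun x : β' => d (u x.1)) e x := by
    intro x
    show Sum.elim _ _ (E.symm (E x)) = _
    rw [Equiv.symm_apply_apply]; try rfl
  have hζhbb : ∀ v : Fin 1 → C, ζh.Realize (Sum.elim v bb) ↔
      ζ.Realize (Sum.elim v (Sum.elim (fun x : β' => d (u x.1)) e)) := by
    intro v
    rw [hζh]
    refine realize_funext ?_
    rintro (x | y)
    · rfl
    · exact hbbE y
  have hc1 : φ.Realize (Sum.elim (fun p => d (u p)) e) ↔ χ.Realize W₁ := by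
    rw [hχ]
    constructor
    · intro h
      refine ⟨![d js], (hθW₁ _).mpr hθd, (hζW₁ _).mpr ?_⟩
      rw [hζ]
      refine (realize_funext ?_).mpr h
      rintro (p | q)
      · show (if h : u p = js then (![d js] : Fin 1 → C) 0 else d (u p)) = d (u p)
        by_cases h' : u p = js
        · rw [dif_pos h', h']; try rfl
        · rw [dif_neg h']; try rfl
      · rfl
    · rintro ⟨v₀, hθv₀, hζv₀⟩
      have h1 : ζh.Realize (Sum.elim v₀ bb) := (hζhbb v₀).mpr ((hζW₁ v₀).mp hζv₀)
      have h2 := dec' v₀ ![d js] ((hθW₁ v₀).mp hθv₀) hθd bb hbb h1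
      have h3 := (hζhbb _).mp h2
      rw [hζ] at h3
      refine (realize_funext ?_).mp h3
      rintro (p | q)
      · show (if h : u p = js then (![d js] : Fin 1 → C) 0 else d (u p)) = d (u p)
        by_cases h' : u p = js
        · rw [dif_pos h', h']; try rfl
        · rw [dif_neg h']; try rfl
      · rfl
  let Ed : (β' ⊕ κd) ≃ Fin (Fintype.card (β' ⊕ κd)) := Fintype.equivFin _
  let Ee : (Fin m ⊕ κA) ≃ Fin (Fintype.card (Fin m ⊕ κA)) := Fintype.equivFin _
  let u₂ : Fin (Fintype.card (β' ⊕ κd)) → ι :=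
    fun t => Sum.elim (fun x : β' => u x.1) kIdx (Ed.symm t)
  have hu₂ : ∀ t, r (u₂ t) js := by
    intro t
    show r (Sum.elim (fun x : β' => u x.1) kIdx (Ed.symm t)) js
    rcases Ed.symm t with x | q
    · exact hβ' x
    · exact (hkIdx q).1
  let e₂ : Fin (Fintype.card (Fin m ⊕ κA)) → C :=
    fun t => Sum.elim e (fun q : κA => a q.1) (Ee.symm t)
  have he₂ : ∀ t, e₂ t ∈ D := by
    intro t
    show Sum.elim e (fun q : κA => a q.1) (Ee.symm t) ∈ D
    rcases Ee.symm t with y | q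
    · exact he y
    · exact hAD (hτn q.1 q.2)
  have htrans : ∀ ξ : L.Formula F, (ξ.Realize W₁ ↔ ξ.Realize W₂) := by
    intro ξ
    let ξ₂ : L.Formula (Fin (Fintype.card (β' ⊕ κd)) ⊕ Fin (Fintype.card (Fin m ⊕ κA))) :=
      ξ.relabel (Sum.map Ed Ee)
    have hξ₂ : ∀ (T : Fin (Fintype.card (β' ⊕ κd)) → C)
        (P : Fin (Fintype.card (Fin m ⊕ κA)) → C),
        ξ₂.Realize (Sum.elim T P) ↔
          ξ.Realize (Sum.elim (fun z => T (Ed z)) (fun z => P (Ee z))) := by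
      intro T P
      show (ξ.relabel (Sum.map Ed Ee)).Realize _ ↔ _
      rw [Formula.realize_relabel]
      refine realize_funext ?_
      rintro (z | z) <;> rfl
    have hmain := IHs _ u₂ hu₂ _ ξ₂ e₂ he₂
    have h₁ : ξ₂.Realize (Sum.elim (fun t => d (u₂ t)) e₂) ↔ ξ.Realize W₁ := by
      rw [hξ₂]
      refine realize_funext ?_
      rintro (z | z)
      · show d (Sum.elim (fun x : β' => u x.1) kIdx (Ed.symm (Ed z))) = _
        rw [Equiv.symm_apply_apply]; try rfl
        rcases z with x | q <;> rfl
      · show Sum.elim e (fun q : κA => a q.1) (Ee.symm (Ee z)) = _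
        rw [Equiv.symm_apply_apply]; try rfl
    have h₂ : ξ₂.Realize (Sum.elim (fun t => g (d (u₂ t))) e₂) ↔ ξ.Realize W₂ := by
      rw [hξ₂]
      refine realize_funext ?_
      rintro (z | z)
      · show g (d (Sum.elim (fun x : β' => u x.1) kIdx (Ed.symm (Ed z)))) = _
        rw [Equiv.symm_apply_apply]; try rfl
        rcases z with x | q <;> rfl
      · show Sum.elim e (fun q : κA => a q.1) (Ee.symm (Ee z)) = _
        rw [Equiv.symm_apply_apply]; try rfl
    exact h₁.symm.trans (hmain.trans h₂)
  have hΔ₁ : Δ.Realize W₁ := by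
    rw [hΔ]
    intro v w h1 h2
    constructor
    · intro hv
      exact (hζW₁ w).mpr ((hζhbb w).mp (dec' v w ((hθW₁ v).mp h1) ((hθW₁ w).mp h2)
        bb hbb ((hζhbb v).mpr ((hζW₁ v).mp hv))))
    · intro hv
      exact (hζW₁ v).mpr ((hζhbb v).mp (dec' w v ((hθW₁ w).mp h2) ((hθW₁ v).mp h1)
        bb hbb ((hζhbb w).mpr ((hζW₁ w).mp hv))))
  have hΔ₂ : Δ.Realize W₂ := (htrans Δ).mp hΔ₁
  let Et : (Fin 1 ⊕ κd) ≃ Fin (Fintype.card (Fin 1 ⊕ κd)) := Fintype.equivFin _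
  let EA : κA ≃ Fin (Fintype.card κA) := Fintype.equivFin _
  let gmap : Fin 1 ⊕ Fin m' → Fin (Fintype.card (Fin 1 ⊕ κd)) ⊕ Fin (Fintype.card κA) :=
    Sum.elim (fun v => Sum.inl (Et (Sum.inl v)))
      (fun q => if h : τ q = none then Sum.inr (EA ⟨q, h⟩) else Sum.inl (Et (Sum.inr ⟨q, h⟩)))
  let θ₃ := θ.relabel gmap
  let T : Fin (Fintype.card (Fin 1 ⊕ κd)) → C :=
    fun t => Sum.elim (fun _ : Fin 1 => d js) (fun q : κd => d (kIdx q)) (Et.symm t)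
  let P : Fin (Fintype.card κA) → C := fun t => a (EA.symm t).1
  have hTB : ∀ t, T t ∈ B := by
    intro t
    rw [hB]
    show Sum.elim (fun _ : Fin 1 => d js) (fun q : κd => d (kIdx q)) (Et.symm t) ∈ _
    rcases Et.symm t with x | q
    · exact Or.inr ⟨js, rfl⟩
    · exact Or.inr ⟨kIdx q, rfl⟩
  have hPA : ∀ t, P t ∈ A := fun t => hτn _ (EA.symm t).2
  have hθ₃ : ∀ T' : Fin (Fintype.card (Fin 1 ⊕ κd)) → C,
      θ₃.Realize (Sum.elim T' P) ↔
        θ.Realize (Sum.elim (fun v => T' (Et (Sum.inl v)))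
          (fun q => if h : τ q = none then P (EA ⟨q, h⟩) else T' (Et (Sum.inr ⟨q, h⟩)))) := by
    intro T'
    show (θ.relabel gmap).Realize _ ↔ _
    rw [Formula.realize_relabel]
    refine realize_funext ?_
    rintro (x | q)
    · rfl
    · show Sum.elim T' P
          (if h : τ q = none then Sum.inr (EA ⟨q, h⟩) else Sum.inl (Et (Sum.inr ⟨q, h⟩))) =
        if h : τ q = none then P (EA ⟨q, h⟩) else T' (Et (Sum.inr ⟨q, h⟩))
      by_cases h : τ q = none
      · rw [dif_pos h, dif_pos h]; try rfl
      · rw [dif_neg h, dif_neg h]; try rfl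
  have hθ₃d : θ₃.Realize (Sum.elim T P) := by
    rw [hθ₃]
    refine (realize_funext ?_).mpr hθd
    rintro (x | q)
    · show Sum.elim (fun _ : Fin 1 => d js) (fun q : κd => d (kIdx q))
          (Et.symm (Et (Sum.inl x))) = (![d js] : Fin 1 → C) x
      rw [Equiv.symm_apply_apply]; try rfl
      exact (Matrix.cons_val_fin_one _ _ _).symm
    · show (if h : τ q = none then a (EA.symm (EA ⟨q, h⟩)).1
          else Sum.elim (fun _ : Fin 1 => d js) (fun q : κd => d (kIdx q))
            (Et.symm (Et (Sum.inr ⟨q, h⟩)))) = a q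
      by_cases h : τ q = none
      · rw [dif_pos h, Equiv.symm_apply_apply]; try rfl
      · rw [dif_neg h, Equiv.symm_apply_apply]; try rfl
        exact ((hkIdx ⟨q, h⟩).2).symm
  have hgθ₃ := (hgB _ _ θ₃ T P hTB hPA).mp hθ₃d
  have hc4 : θ'.Realize (Sum.elim ![g (d js)] W₂) := by
    rw [hθ' _ W₂]
    rw [hθ₃] at hgθ₃
    refine (realize_funext ?_).mp hgθ₃
    rintro (x | q)
    · show g (Sum.elim (fun _ : Fin 1 => d js) (fun q : κd => d (kIdx q))
          (Et.symm (Et (Sum.inl x)))) = (![g (d js)] : Fin 1 → C) x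
      rw [Equiv.symm_apply_apply]; try rfl
      exact (Matrix.cons_val_fin_one _ _ _).symm
    · show (if h : τ q = none then a (EA.symm (EA ⟨q, h⟩)).1
          else g (Sum.elim (fun _ : Fin 1 => d js) (fun q : κd => d (kIdx q))
            (Et.symm (Et (Sum.inr ⟨q, h⟩))))) =
        if h : τ q = none then W₂ (Sum.inr (Sum.inr ⟨q, h⟩)) else W₂ (Sum.inl (Sum.inr ⟨q, h⟩))
      by_cases h : τ q = none
      · rw [dif_pos h, dif_pos h, Equiv.symm_apply_apply]; try rfl
      · rw [dif_neg h, dif_neg h, Equiv.symm_apply_apply]; try rfl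
  have hc5 : χ.Realize W₂ ↔ φ.Realize (Sum.elim (fun p => g (d (u p))) e) := by
    rw [hχ]
    constructor
    · rintro ⟨v₀, hθv₀, hζv₀⟩
      have h5 := ((hΔ W₂).mp hΔ₂ v₀ ![g (d js)] hθv₀ hc4).mp hζv₀
      have h6 := (hζW₂ _).mp h5
      rw [hζ] at h6
      refine (realize_funext ?_).mp h6
      rintro (p | q)
      · show (if h : u p = js then (![g (d js)] : Fin 1 → C) 0 else g (d (u p))) = g (d (u p))
        by_cases h' : u p = js
        · rw [dif_pos h', h']; try rfl
        · rw [dif_neg h']; try rfl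
      · rfl
    · intro h
      refine ⟨![g (d js)], hc4, (hζW₂ _).mpr ?_⟩
      rw [hζ]
      refine (realize_funext ?_).mpr h
      rintro (p | q)
      · show (if h : u p = js then (![g (d js)] : Fin 1 → C) 0 else g (d (u p))) = g (d (u p))
        by_cases h' : u p = js
        · rw [dif_pos h', h']; try rfl
        · rw [dif_neg h']; try rfl
      · rfl
  exact hc1.trans ((htrans χ).trans hc5)

private lemma gFull {B : Set C} (hAD : A ⊆ D) (hwo : IsWellOrder ι r) (ht : SubT L A D)
    (hB : B = A ∪ Set.range d)
    (hli : ∀ i : ι, LocallyIsolatedTp L (A ∪ d '' {j | r j i}) ![d i])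
    (g : C → C)
    (hgB : ∀ (n m : ℕ) (φ : L.Formula (Fin n ⊕ Fin m)) (b : Fin n → C) (a : Fin m → C),
      (∀ i, b i ∈ B) → (∀ i, a i ∈ A) →
      (φ.Realize (Sum.elim b a) ↔ φ.Realize (Sum.elim (g ∘ b) a))) :
    ∀ (l : ℕ) (u : Fin l → ι), TransferClaim (L := L) D d g l u := by
  classical
  have triv : ∀ (l : ℕ) (u : Fin l → ι), (Finset.univ.image u = ∅) →
      TransferClaim (L := L) D d g l u := by
    intro l u hemp m φ e he
    refine realize_funext ?_
    rintro (p | q)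
    · exact absurd (Finset.mem_image_of_mem u (Finset.mem_univ p)) (by simp [hemp])
    · rfl
  have bdd : ∀ i : ι, ∀ (l : ℕ) (u : Fin l → ι), (∀ p, r (u p) i ∨ u p = i) →
      TransferClaim (L := L) D d g l u := by
    intro i0
    refine hwo.toIsWellFounded.wf.induction
      (C := fun i => ∀ (l : ℕ) (u : Fin l → ι), (∀ p, r (u p) i ∨ u p = i) →
        TransferClaim (L := L) D d g l u) i0 ?_
    intro i IH
    have IHs : ∀ (l : ℕ) (u : Fin l → ι), (∀ p, r (u p) i) →
        TransferClaim (L := L) D d g l u := by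
      intro l u hu
      rcases (Finset.univ.image u).eq_empty_or_nonempty with hemp | hne
      · exact triv l u hemp
      · obtain ⟨j0, hj0, hmax⟩ := exists_rmax hwo _ hne
        obtain ⟨p0, _, hp0⟩ := Finset.mem_image.mp hj0
        have hj0i : r j0 i := hp0 ▸ hu p0
        exact IH j0 hj0i l u
          (fun p => hmax _ (Finset.mem_image_of_mem u (Finset.mem_univ p)))
    exact fun l u hu => gCore hAD hwo ht hB hli g hgB i IHs l u hu
  intro l u
  rcases (Finset.univ.image u).eq_empty_or_nonempty with hemp | hne
  · exact triv l u hemp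
  · obtain ⟨j0, hj0, hmax⟩ := exists_rmax hwo _ hne
    exact bdd j0 l u (fun p => hmax _ (Finset.mem_image_of_mem u (Finset.mem_univ p)))

end Statement17Aux


/-- local constructions transfer along `⊆_t`: if `B` is locally
constructible over `A` and `A ⊆_t D`, then the same sequence is a local construction
over `D`, `A ∪ B ⊆_t D ∪ B`, and `tp(B/A) ⊢ tp(B/D)`. -/
theorem statement_17 (A B D : Set C) (hAD : A ⊆ D) (ht : SubT L A D)
    (ι : Type u) (r : ι → ι → Prop) (hwo : IsWellOrder ι r) (d : ι → C)
    (hB : B = A ∪ Set.range d)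
    (hli : ∀ i : ι, LocallyIsolatedTp L (A ∪ d '' {j | r j i}) ![d i]) :
    (∀ i : ι, LocallyIsolatedTp L (D ∪ d '' {j | r j i}) ![d i]) ∧
    LocallyConstructibleOver L D (D ∪ Set.range d) ∧
    SubT L (A ∪ B) (D ∪ B) ∧
    (∀ g : C → C, (∀ a ∈ A, g a = a) →
      (∀ (n m : ℕ) (φ : L.Formula (Fin n ⊕ Fin m)) (b : Fin n → C) (a : Fin m → C),
        (∀ i, b i ∈ B) → (∀ i, a i ∈ A) →
        (φ.Realize (Sum.elim b a) ↔ φ.Realize (Sum.elim (g ∘ b) a))) →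
      ∀ (n m : ℕ) (φ : L.Formula (Fin n ⊕ Fin m)) (b : Fin n → C) (e : Fin m → C),
        (∀ i, b i ∈ B) → (∀ i, e i ∈ D) →
        (φ.Realize (Sum.elim b e) ↔ φ.Realize (Sum.elim (g ∘ b) e))) := by
  subst hB
  have c1 := conj1aux (L := L) hAD hwo ht hli
  refine ⟨c1, ⟨ι, r, hwo, d, rfl, c1⟩, ?_, ?_⟩
  · intro n m ψ a b ha hb hre
    obtain ⟨b', hb', hre'⟩ := subT_of_move (S := Set.range d) (moveS hwo ht hli) n m ψ a b
      (fun q => by rcases ha q with h | h; exacts [Or.inl h, h])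
      (fun q => hb q) hre
    exact ⟨b', fun q => Or.inr (hb' q), hre'⟩
  · intro g hgA hgB n m φ b e hb he
    classical
    have hfull := gFull (B := A ∪ Set.range d) hAD hwo ht rfl hli g hgB
    have hch : ∀ p, ∃ jo : Option ι, (jo = none → b p ∈ A) ∧
        ∀ j, jo = some j → b p = d j := by
      intro p
      rcases hb p with h | ⟨j, hdj⟩
      · exact ⟨none, fun _ => h, by simp⟩
      · exact ⟨some j, by simp, fun j' hj' => by
          obtain rfl := Option.some.inj hj'
          exact hdj.symm⟩
    choose τ hτn hτs using hch
    let βd := {p : Fin n // τ p ≠ none}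
    let βA := {p : Fin n // τ p = none}
    let idx : βd → ι := fun p => (τ p.1).get (Option.ne_none_iff_isSome.mp p.2)
    have hidx : ∀ p : βd, b p.1 = d (idx p) := fun p => hτs p.1 _ (Option.some_get _).symm
    let Ed : βd ≃ Fin (Fintype.card βd) := Fintype.equivFin _
    let Ee : (βA ⊕ Fin m) ≃ Fin (Fintype.card (βA ⊕ Fin m)) := Fintype.equivFin _
    let gm : Fin n ⊕ Fin m → Fin (Fintype.card βd) ⊕ Fin (Fintype.card (βA ⊕ Fin m)) :=
      Sum.elim
        (fun p => if h : τ p = none then Sum.inr (Ee (Sum.inl ⟨p, h⟩))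
          else Sum.inl (Ed ⟨p, h⟩))
        (fun q => Sum.inr (Ee (Sum.inr q)))
    let φ₄ := φ.relabel gm
    let u₄ : Fin (Fintype.card βd) → ι := fun t => idx (Ed.symm t)
    let e₄ : Fin (Fintype.card (βA ⊕ Fin m)) → C :=
      fun t => Sum.elim (fun p : βA => b p.1) e (Ee.symm t)
    have he₄ : ∀ t, e₄ t ∈ D := by
      intro t
      show Sum.elim (fun p : βA => b p.1) e (Ee.symm t) ∈ D
      rcases Ee.symm t with p | q
      · exact hAD (hτn p.1 p.2)
      · exact he q
    have hφ₄ : ∀ (T : Fin (Fintype.card βd) → C) (P : Fin (Fintype.card (βA ⊕ Fin m)) → C),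
        φ₄.Realize (Sum.elim T P) ↔
          φ.Realize (Sum.elim
            (fun p => if h : τ p = none then P (Ee (Sum.inl ⟨p, h⟩)) else T (Ed ⟨p, h⟩))
            (fun q => P (Ee (Sum.inr q)))) := by
      intro T P
      show (φ.relabel gm).Realize _ ↔ _
      rw [Formula.realize_relabel]
      refine realize_funext ?_
      rintro (p | q)
      · show Sum.elim T P (if h : τ p = none then Sum.inr (Ee (Sum.inl ⟨p, h⟩))
            else Sum.inl (Ed ⟨p, h⟩)) =
          if h : τ p = none then P (Ee (Sum.inl ⟨p, h⟩)) else T (Ed ⟨p, h⟩)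
        by_cases h : τ p = none
        · rw [dif_pos h, dif_pos h]; try rfl
        · rw [dif_neg h, dif_neg h]; try rfl
      · rfl
    have main := hfull _ u₄ _ φ₄ e₄ he₄
    have hL : φ₄.Realize (Sum.elim (fun t => d (u₄ t)) e₄) ↔
        φ.Realize (Sum.elim b e) := by
      rw [hφ₄]
      refine realize_funext ?_
      rintro (p | q)
      · show (if h : τ p = none then e₄ (Ee (Sum.inl ⟨p, h⟩)) else d (u₄ (Ed ⟨p, h⟩))) = b p
        by_cases h : τ p = none
        · rw [dif_pos h]
          show Sum.elim (fun p : βA => b p.1) e (Ee.symm (Ee (Sum.inl ⟨p, h⟩))) = b p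
          rw [Equiv.symm_apply_apply]; try rfl
        · rw [dif_neg h]
          show d (idx (Ed.symm (Ed ⟨p, h⟩))) = b p
          rw [Equiv.symm_apply_apply]; try rfl
          exact (show b p = d (idx ⟨p, h⟩) from hidx ⟨p, h⟩).symm
      · show Sum.elim (fun p : βA => b p.1) e (Ee.symm (Ee (Sum.inr q))) = e q
        rw [Equiv.symm_apply_apply]; try rfl
    have hR : φ₄.Realize (Sum.elim (fun t => g (d (u₄ t))) e₄) ↔
        φ.Realize (Sum.elim (g ∘ b) e) := by
      rw [hφ₄]
      refine realize_funext ?_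
      rintro (p | q)
      · show (if h : τ p = none then e₄ (Ee (Sum.inl ⟨p, h⟩)) else g (d (u₄ (Ed ⟨p, h⟩)))) = g (b p)
        by_cases h : τ p = none
        · rw [dif_pos h]
          show Sum.elim (fun p : βA => b p.1) e (Ee.symm (Ee (Sum.inl ⟨p, h⟩))) = g (b p)
          rw [Equiv.symm_apply_apply]; try rfl
          exact (hgA (b p) (hτn p h)).symm
        · rw [dif_neg h]
          show g (d (idx (Ed.symm (Ed ⟨p, h⟩)))) = g (b p)
          rw [Equiv.symm_apply_apply,
            show b p = d (idx ⟨p, h⟩) from hidx ⟨p, h⟩]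
      · show Sum.elim (fun p : βA => b p.1) e (Ee.symm (Ee (Sum.inr q))) = e q
        rw [Equiv.symm_apply_apply]; try rfl
    exact hL.symm.trans (main.trans hR)

end Gaifman
end
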